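/- arXiv:2601.09311 — 5 statements merged into one kernel-verified Lean document; each statement's English description precedes it below -/
import Mathlib

section
/- Let X and Y be Polish spaces with their Borel σ-algebras, and let (γ_n)_{n≥1} be a sequence of Borel probability measures on X × Y all having the same first marginal μ on X. Then there exist Borel measurable maps ξ : (0,1) → X and, for each n ≥ 1, ξ_n : (0,1) → Y, such that for every n the pushforward of Lebesgue measure on (0,1) under the map u ↦ (ξ(u), ξ_n(u)) equals γ_n. In particular, the map ξ realizing the common first marginal can be chosen independently of n. -/
open MeasureTheory ProbabilityTheory Set Filter
open scoped Topology

noncomputable section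

namespace Stmt0Aux

/-- Lebesgue measure on `(0,1)`. -/
def leb01 : Measure ℝ := volume.restrict (Set.Ioo (0:ℝ) 1)

instance : IsProbabilityMeasure leb01 :=
  ⟨by simp [leb01, Real.volume_Ioo]⟩

/-- Raw quantile function. -/
def qAux (ν : Measure ℝ) (v : ℝ) : ℝ := sInf {x | v ≤ cdf ν x}

/-- Quantile function, with junk values fixed outside `(0,1)`. -/
def quantile (ν : Measure ℝ) (v : ℝ) : ℝ :=
  if v ∈ Ioo (0:ℝ) 1 then qAux ν v else qAux ν (1/2)

variable {ν : Measure ℝ}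

lemma qAux_nonempty [IsProbabilityMeasure ν] {v : ℝ} (hv1 : v < 1) :
    {x | v ≤ cdf ν x}.Nonempty := by
  have h := (tendsto_cdf_atTop ν).eventually (eventually_ge_nhds hv1)
  exact h.exists

lemma qAux_bddBelow [IsProbabilityMeasure ν] {v : ℝ} (hv0 : 0 < v) :
    BddBelow {x | v ≤ cdf ν x} := by
  have h := (tendsto_cdf_atBot ν).eventually (eventually_lt_nhds hv0)
  obtain ⟨x0, hx0⟩ := h.exists_forall_of_atBot
  refine ⟨x0, fun y hy => ?_⟩
  by_contra hxy
  exact absurd hy (not_le.2 (hx0 y (le_of_lt (not_le.1 hxy))))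

lemma le_cdf_qAux [IsProbabilityMeasure ν] {v : ℝ} (hv : v ∈ Ioo (0:ℝ) 1) :
    v ≤ cdf ν (qAux ν v) := by
  have hne := qAux_nonempty (ν := ν) hv.2
  have hbdd := qAux_bddBelow (ν := ν) hv.1
  have h1 : ∀ z ∈ Ioi (qAux ν v), v ≤ cdf ν z := by
    intro z hz
    obtain ⟨y, hy, hyz⟩ := exists_lt_of_csInf_lt hne hz
    exact le_trans hy ((cdf ν).mono hyz.le)
  have h2 : Tendsto (cdf ν) (𝓝[>] (qAux ν v)) (𝓝 (cdf ν (qAux ν v))) :=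
    ((cdf ν).right_continuous (qAux ν v)).tendsto.mono_left
      (nhdsWithin_mono _ Ioi_subset_Ici_self)
  exact ge_of_tendsto h2 (eventually_nhdsWithin_of_forall h1)

lemma qAux_le_iff [IsProbabilityMeasure ν] {v : ℝ} (hv : v ∈ Ioo (0:ℝ) 1) (x : ℝ) :
    qAux ν v ≤ x ↔ v ≤ cdf ν x := by
  constructor
  · intro h
    exact le_trans (le_cdf_qAux hv) ((cdf ν).mono h)
  · intro h
    exact csInf_le (qAux_bddBelow hv.1) h

lemma quantile_le_iff [IsProbabilityMeasure ν] {v : ℝ} (hv : v ∈ Ioo (0:ℝ) 1) (x : ℝ) :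
    quantile ν v ≤ x ↔ v ≤ cdf ν x := by
  rw [quantile, if_pos hv]; exact qAux_le_iff hv x

lemma quantile_notMem {v : ℝ} (hv : v ∉ Ioo (0:ℝ) 1) :
    quantile ν v = qAux ν (1/2) := if_neg hv

/-- Joint measurability of the quantile of a Markov kernel. -/
lemma measurable_quantile_kernel {Z : Type*} [MeasurableSpace Z]
    (κ : ProbabilityTheory.Kernel Z ℝ) [ProbabilityTheory.IsMarkovKernel κ] :
    Measurable (fun p : Z × ℝ => quantile (κ p.1) p.2) := by
  apply measurable_of_Iic
  intro t
  have hC : Measurable (fun z : Z => cdf (κ z) t) := by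
    have : (fun z : Z => cdf (κ z) t) = fun z => ((κ z) (Iic t)).toReal := by
      funext z; rw [cdf_eq_real, measureReal_def]
    rw [this]
    exact (κ.measurable_coe measurableSet_Iic).ennreal_toReal
  have hset : (fun p : Z × ℝ => quantile (κ p.1) p.2) ⁻¹' Iic t
      = ({p : Z × ℝ | p.2 ∈ Ioo (0:ℝ) 1} ∩ {p | p.2 ≤ cdf (κ p.1) t})
        ∪ ({p : Z × ℝ | p.2 ∈ Ioo (0:ℝ) 1}ᶜ ∩ {p | (1:ℝ)/2 ≤ cdf (κ p.1) t}) := by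
    ext ⟨z, v⟩
    by_cases hv : v ∈ Ioo (0:ℝ) 1
    · simp only [mem_preimage, mem_Iic, mem_union, mem_inter_iff, mem_setOf_eq, mem_compl_iff, hv,
        not_true, false_and, or_false, true_and]
      exact quantile_le_iff hv t
    · simp only [mem_preimage, mem_Iic, mem_union, mem_inter_iff, mem_setOf_eq, mem_compl_iff, hv,
        false_and, not_false_iff, true_and, false_or]
      rw [quantile_notMem hv]
      exact qAux_le_iff (by norm_num) t
  rw [hset]
  have h1 : MeasurableSet {p : Z × ℝ | p.2 ∈ Ioo (0:ℝ) 1} :=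
    measurable_snd measurableSet_Ioo
  have h2 : MeasurableSet {p : Z × ℝ | p.2 ≤ cdf (κ p.1) t} :=
    measurableSet_le measurable_snd (hC.comp measurable_fst)
  have h3 : MeasurableSet {p : Z × ℝ | (1:ℝ)/2 ≤ cdf (κ p.1) t} :=
    measurableSet_le measurable_const (hC.comp measurable_fst)
  exact (h1.inter h2).union (h1.compl.inter h3)

lemma measurable_quantile (ν : Measure ℝ) [IsProbabilityMeasure ν] :
    Measurable (quantile ν) := by
  have := measurable_quantile_kernel (ProbabilityTheory.Kernel.const Unit ν)
  have h : (quantile ν) = (fun p : Unit × ℝ => quantile ((ProbabilityTheory.Kernel.const Unit ν) p.1) p.2)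
      ∘ (fun v => ((), v)) := by
    funext v; simp [ProbabilityTheory.Kernel.const_apply]
  rw [h]
  exact this.comp (measurable_const.prodMk measurable_id)

/-- The quantile function pushes Lebesgue measure on `(0,1)` to `ν`. -/
lemma map_quantile (ν : Measure ℝ) [IsProbabilityMeasure ν] :
    Measure.map (quantile ν) leb01 = ν := by
  have hmeas := measurable_quantile ν
  have : IsProbabilityMeasure (Measure.map (quantile ν) leb01) :=
    Measure.isProbabilityMeasure_map hmeas.aemeasurable
  refine Measure.ext_of_Iic _ _ (fun x => ?_)
  rw [Measure.map_apply hmeas measurableSet_Iic]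
  have hpre : (quantile ν) ⁻¹' (Iic x) ∩ Ioo (0:ℝ) 1
      = Iic (cdf ν x) ∩ Ioo (0:ℝ) 1 := by
    ext v
    simp only [mem_inter_iff, mem_preimage, mem_Iic, and_congr_left_iff]
    intro hv
    exact quantile_le_iff hv x
  have h0 : 0 ≤ cdf ν x := cdf_nonneg ν x
  have h1 : cdf ν x ≤ 1 := cdf_le_one ν x
  have : leb01 ((quantile ν) ⁻¹' (Iic x)) = ENNReal.ofReal (cdf ν x) := by
    rw [leb01, Measure.restrict_apply (hmeas measurableSet_Iic), hpre]
    rcases lt_or_ge (cdf ν x) 1 with hc | hc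
    · have : Iic (cdf ν x) ∩ Ioo (0:ℝ) 1 = Ioc 0 (cdf ν x) := by
        ext v
        simp only [mem_inter_iff, mem_Iic, mem_Ioo, mem_Ioc]
        constructor
        · rintro ⟨h, h2, h3⟩; exact ⟨h2, h⟩
        · rintro ⟨h2, h⟩; exact ⟨h, h2, lt_of_le_of_lt h hc⟩
      rw [this, Real.volume_Ioc, sub_zero]
    · have hc1 : cdf ν x = 1 := le_antisymm h1 hc
      have : Iic (cdf ν x) ∩ Ioo (0:ℝ) 1 = Ioo (0:ℝ) 1 := by
        rw [hc1]
        ext v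
        simp only [mem_inter_iff, mem_Iic, mem_Ioo]
        exact ⟨fun h => h.2, fun h => ⟨h.2.le, h⟩⟩
      rw [this, Real.volume_Ioo, hc1, sub_zero]
  rw [this, ofReal_cdf]

/-- Pushing measures forward along a measurable embedding is injective. -/
lemma map_injective_embedding {α β : Type*} [MeasurableSpace α] [MeasurableSpace β]
    {f : α → β} (hf : MeasurableEmbedding f) {μ₁ μ₂ : Measure α}
    (h : Measure.map f μ₁ = Measure.map f μ₂) : μ₁ = μ₂ := by
  ext s hs
  have h1 : μ₁ s = Measure.map f μ₁ (f '' s) := by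
    rw [hf.map_apply, preimage_image_eq _ hf.injective]
  have h2 : μ₂ s = Measure.map f μ₂ (f '' s) := by
    rw [hf.map_apply, preimage_image_eq _ hf.injective]
  rw [h1, h2, h]

/-- Every probability measure on a nonempty standard Borel space is the pushforward of
Lebesgue measure on `(0,1)` by a measurable map. -/
lemma exists_pushforward (Z : Type*) [MeasurableSpace Z] [StandardBorelSpace Z] [Nonempty Z]
    (ν : Measure Z) [IsProbabilityMeasure ν] :
    ∃ f : ℝ → Z, Measurable f ∧ Measure.map f leb01 = ν := by
  set e := embeddingReal Z with he_def
  have he : MeasurableEmbedding e := measurableEmbedding_embeddingReal Z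
  have hν' : IsProbabilityMeasure (Measure.map e ν) :=
    Measure.isProbabilityMeasure_map he.measurable.aemeasurable
  obtain ⟨r, hr, hre⟩ := he.exists_measurable_extend measurable_id (fun _ => ⟨Classical.arbitrary Z⟩)
  set q := quantile (Measure.map e ν) with hq_def
  have hq : Measurable q := measurable_quantile _
  refine ⟨r ∘ q, hr.comp hq, ?_⟩
  have hae : (fun v => e ((r ∘ q) v)) =ᵐ[leb01] q := by
    have hnull : leb01 (q ⁻¹' (range e)ᶜ) = 0 := by
      have : leb01 (q ⁻¹' (range e)ᶜ) = Measure.map q leb01 (range e)ᶜ := by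
        rw [Measure.map_apply hq he.measurableSet_range.compl]
      rw [this, map_quantile, Measure.map_apply he.measurable he.measurableSet_range.compl]
      simp
    refine Filter.eventuallyEq_of_mem (compl_mem_ae_iff.mpr hnull) ?_
    intro v hv
    simp only [mem_compl_iff, mem_preimage, not_not] at hv
    obtain ⟨z, hz⟩ := hv
    simp only [Function.comp_apply, ← hz]
    have : r (e z) = z := congrFun hre z
    rw [this]
  apply map_injective_embedding he
  calc Measure.map e (Measure.map (r ∘ q) leb01)
      = Measure.map (fun v => e ((r ∘ q) v)) leb01 := by
        rw [Measure.map_map he.measurable (hr.comp hq)]; rfl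
    _ = Measure.map q leb01 := Measure.map_congr hae
    _ = Measure.map e ν := map_quantile _

end Stmt0Aux

end

open Stmt0Aux ProbabilityTheory Set Filter


open MeasureTheory

/-- Let `X` and `Y` be Polish spaces with their Borel σ-algebras, and let
`(γ_n)` be a sequence of Borel probability measures on `X × Y` all having the same first
marginal `μ` on `X`. Then there exist Borel measurable maps `ξ : (0,1) → X` and, for each `n`,
`ξ_n : (0,1) → Y`, such that for every `n` the pushforward of Lebesgue measure on `(0,1)`
under `u ↦ (ξ u, ξ_n u)` equals `γ_n`. -/
theorem stmt0
    {X Y : Type*} [TopologicalSpace X] [PolishSpace X] [MeasurableSpace X] [BorelSpace X]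
    [TopologicalSpace Y] [PolishSpace Y] [MeasurableSpace Y] [BorelSpace Y]
    (γ : ℕ → Measure (X × Y)) (hγ : ∀ n, IsProbabilityMeasure (γ n))
    (μ : Measure X) (hmarg : ∀ n, (γ n).map Prod.fst = μ) :
    ∃ (ξ : ℝ → X) (ξn : ℕ → ℝ → Y), Measurable ξ ∧ (∀ n, Measurable (ξn n)) ∧
      ∀ n, Measure.map (fun u => (ξ u, ξn n u)) (volume.restrict (Set.Ioo (0:ℝ) 1)) = γ n := by
  classical
  haveI := hγ 0
  haveI : Nonempty (X × Y) := by
    by_contra h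
    rw [not_nonempty_iff] at h
    have h1 : (γ 0) Set.univ = 1 := measure_univ
    rw [Set.univ_eq_empty_iff.mpr h, measure_empty] at h1
    exact zero_ne_one h1
  haveI : Nonempty X := Nonempty.map Prod.fst ‹Nonempty (X × Y)›
  haveI : Nonempty Y := Nonempty.map Prod.snd ‹Nonempty (X × Y)›
  haveI : IsProbabilityMeasure μ := by
    rw [← hmarg 0]; exact Measure.isProbabilityMeasure_map measurable_fst.aemeasurable
  set eY := MeasureTheory.embeddingReal Y with heY_def
  have heY : MeasurableEmbedding eY := measurableEmbedding_embeddingReal Y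
  obtain ⟨rY, hrY, hrYe⟩ :=
    heY.exists_measurable_extend measurable_id (fun _ => ⟨Classical.arbitrary Y⟩)
  have hpm : Measurable (Prod.map (id : X → X) eY) :=
    (measurable_fst).prodMk (heY.measurable.comp measurable_snd)
  set ρ : ℕ → Measure (X × ℝ) := fun n => (γ n).map (Prod.map id eY) with hρ
  haveI hρp : ∀ n, IsProbabilityMeasure (ρ n) := fun n => by
    haveI := hγ n; exact Measure.isProbabilityMeasure_map hpm.aemeasurable
  have hρfst : ∀ n, (ρ n).fst = μ := by
    intro n
    haveI := hγ n
    rw [hρ, Measure.fst, Measure.map_map measurable_fst hpm]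
    have : (Prod.fst ∘ Prod.map (id : X → X) eY) = Prod.fst := rfl
    rw [this, hmarg n]
  set κ : ℕ → ProbabilityTheory.Kernel X ℝ := fun n => (ρ n).condKernel with hκdef
  haveI hκm : ∀ n, IsMarkovKernel (κ n) := fun n => inferInstance
  have hκ : ∀ n, μ ⊗ₘ κ n = ρ n := by
    intro n
    rw [hκdef, ← hρfst n]
    exact (ρ n).disintegrate (ρ n).condKernel
  obtain ⟨s, hs, hsmap⟩ := exists_pushforward (ℝ × ℝ) (leb01.prod leb01)
  obtain ⟨fX, hfX, hfXmap⟩ := exists_pushforward X μ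
  set ξ : ℝ → X := fun u => fX (s u).1 with hξ
  have hξm : Measurable ξ := hfX.comp (measurable_fst.comp hs)
  set g : ℕ → ℝ → ℝ := fun n u => quantile (κ n (ξ u)) (s u).2 with hg
  have hgm : ∀ n, Measurable (g n) := fun n =>
    (measurable_quantile_kernel (κ n)).comp (hξm.prodMk (measurable_snd.comp hs))
  have hΦ : ∀ n, Measurable (fun p : ℝ × ℝ => (fX p.1, quantile (κ n (fX p.1)) p.2)) := fun n =>
    (hfX.comp measurable_fst).prodMk
      ((measurable_quantile_kernel (κ n)).comp
        ((hfX.comp measurable_fst).prodMk measurable_snd))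
  have hkey : ∀ n, Measure.map (fun u => (ξ u, g n u)) leb01 = ρ n := by
    intro n
    have hcomp : (fun u => (ξ u, g n u))
        = (fun p : ℝ × ℝ => (fX p.1, quantile (κ n (fX p.1)) p.2)) ∘ s := rfl
    rw [hcomp, ← Measure.map_map (hΦ n) hs, hsmap, ← hκ n]
    ext E hE
    rw [Measure.map_apply (hΦ n) hE, Measure.compProd_apply hE,
      Measure.prod_apply ((hΦ n) hE)]
    have hinner : ∀ v1 : ℝ,
        leb01 (Prod.mk v1 ⁻¹' ((fun p : ℝ × ℝ => (fX p.1, quantile (κ n (fX p.1)) p.2)) ⁻¹' E))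
          = κ n (fX v1) (Prod.mk (fX v1) ⁻¹' E) := by
      intro v1
      have hpre : Prod.mk v1 ⁻¹' ((fun p : ℝ × ℝ => (fX p.1, quantile (κ n (fX p.1)) p.2)) ⁻¹' E)
          = (quantile (κ n (fX v1))) ⁻¹' (Prod.mk (fX v1) ⁻¹' E) := rfl
      rw [hpre, ← Measure.map_apply (measurable_quantile _) (measurable_prodMk_left hE),
        map_quantile]
    simp_rw [hinner]
    rw [← hfXmap, lintegral_map (ProbabilityTheory.Kernel.measurable_kernel_prodMk_left hE) hfX]
  set ξn : ℕ → ℝ → Y := fun n u => rY (g n u) with hξn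
  have hξnm : ∀ n, Measurable (ξn n) := fun n => hrY.comp (hgm n)
  refine ⟨ξ, ξn, hξm, hξnm, fun n => ?_⟩
  haveI := hγ n
  show Measure.map (fun u => (ξ u, ξn n u)) leb01 = γ n
  apply map_injective_embedding (MeasurableEmbedding.id.prodMap heY)
  have hmm : Measurable (fun u => (ξ u, ξn n u)) := hξm.prodMk (hξnm n)
  show Measure.map (Prod.map (id : X → X) eY) (Measure.map (fun u => (ξ u, ξn n u)) leb01)
      = Measure.map (Prod.map (id : X → X) eY) (γ n)
  rw [Measure.map_map hpm hmm]
  have hnull : leb01 ((g n) ⁻¹' (range eY)ᶜ) = 0 := by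
    have h1 : (g n) ⁻¹' (range eY)ᶜ
        = (fun u => (ξ u, g n u)) ⁻¹' (univ ×ˢ (range eY)ᶜ) := by
      ext u; simp
    rw [h1, ← Measure.map_apply (hξm.prodMk (hgm n))
      (MeasurableSet.univ.prod heY.measurableSet_range.compl), hkey n, hρ,
      Measure.map_apply hpm (MeasurableSet.univ.prod heY.measurableSet_range.compl)]
    have h2 : (Prod.map (id : X → X) eY) ⁻¹' (univ ×ˢ (range eY)ᶜ) = ∅ := by
      ext p; simp [Prod.map]
    rw [h2, measure_empty]
  have hae : (Prod.map (id : X → X) eY) ∘ (fun u => (ξ u, ξn n u))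
      =ᵐ[leb01] (fun u => (ξ u, g n u)) := by
    refine Filter.eventuallyEq_of_mem (compl_mem_ae_iff.mpr hnull) ?_
    intro u hu
    simp only [mem_compl_iff, mem_preimage, not_not] at hu
    obtain ⟨y, hy⟩ := hu
    have hry : ξn n u = y := by
      rw [hξn]; simp only [← hy]
      exact congrFun hrYe y
    simp only [Function.comp_apply, Prod.map, id_eq, hry, hy]
  rw [Measure.map_congr hae, hkey n, hρ]
end

section
/- Let N ≥ 1 and let t < T be real numbers. Let A : [t,T] → ℝ^{N×N} be a continuous matrix-valued function whose off-diagonal entries are nonnegative, i.e. A_{ij}(s) ≥ 0 for all i ≠ j and all s ∈ [t,T]. Suppose x : [t,T] → ℝ^N is differentiable with x'(s) = A(s) x(s) for all s ∈ [t,T], and x(t) ∈ ℝ^N_+. Then x(s) ∈ ℝ^N_+ for every s ∈ [t,T]. -/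
open Set Matrix Filter
open scoped Topology

attribute [local instance] Matrix.normedAddCommGroup Matrix.normedSpace

/-- Derivative of the squared negative part. -/
lemma negsq_hasDerivAt (u : ℝ) :
    HasDerivAt (fun v : ℝ => (min v 0) ^ 2) (2 * min u 0) u := by
  rcases lt_trichotomy u 0 with hu | hu | hu
  · have h : (fun v : ℝ => (min v 0) ^ 2) =ᶠ[nhds u] fun v => v ^ 2 := by
      filter_upwards [Iio_mem_nhds hu] with v hv
      simp [min_eq_left (le_of_lt (mem_Iio.1 hv))]
    have := hasDerivAt_pow 2 u
    rw [min_eq_left hu.le]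
    simpa using this.congr_of_eventuallyEq h
  · subst hu
    rw [min_self, mul_zero]
    rw [hasDerivAt_iff_isLittleO, Asymptotics.isLittleO_iff]
    intro c hc
    filter_upwards [Metric.ball_mem_nhds 0 hc] with v hv
    rw [Metric.mem_ball, Real.dist_eq, sub_zero] at hv
    have h1 : (min v 0) ^ 2 ≤ v ^ 2 := by
      rcases le_or_gt v 0 with h | h
      · simp [min_eq_left h]
      · simp [min_eq_right h.le, sq_nonneg]
    simp only [min_self, ne_eq, OfNat.ofNat_ne_zero, not_false_eq_true, zero_pow,
      sub_zero, smul_zero, Real.norm_eq_abs]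
    calc |(min v 0) ^ 2| = (min v 0) ^ 2 := abs_of_nonneg (sq_nonneg _)
      _ ≤ v ^ 2 := h1
      _ ≤ c * |v| := by
          nlinarith [sq_abs v, abs_nonneg v, mul_nonneg (sub_nonneg.2 hv.le) (abs_nonneg v)]
  · have h : (fun v : ℝ => (min v 0) ^ 2) =ᶠ[nhds u] fun _ => (0:ℝ) := by
      filter_upwards [Ioi_mem_nhds hu] with v hv
      simp [min_eq_right (le_of_lt (mem_Ioi.1 hv))]
    rw [min_eq_right hu.le, mul_zero]
    exact (hasDerivAt_const u (0:ℝ)).congr_of_eventuallyEq h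

/-- Invariance of the nonnegative orthant for linear ODE systems `x' = A(s) x`
whose matrix has nonnegative off-diagonal entries (the Nagumo-type invariance used for the
Zakai equation). -/
theorem stmt1 {N : ℕ} (hN : 1 ≤ N) {t T : ℝ} (htT : t < T)
    (A : ℝ → Matrix (Fin N) (Fin N) ℝ)
    (hAcont : ContinuousOn A (Icc t T))
    (hAoff : ∀ s ∈ Icc t T, ∀ i j : Fin N, i ≠ j → 0 ≤ A s i j)
    (x : ℝ → Fin N → ℝ)
    (hx : ∀ s ∈ Icc t T, HasDerivWithinAt x (A s *ᵥ x s) (Icc t T) s)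
    (hx0 : ∀ i, 0 ≤ x t i) :
    ∀ s ∈ Icc t T, ∀ i, 0 ≤ x s i := by
  obtain ⟨C, hC⟩ := (isCompact_Icc : IsCompact (Icc t T)).exists_bound_of_continuousOn hAcont
  set C' : ℝ := max C 0 with hC'
  have hC'0 : (0:ℝ) ≤ C' := le_max_right _ _
  have hentry : ∀ s ∈ Icc t T, ∀ i j, |A s i j| ≤ C' := fun s hs i j =>
    (Matrix.norm_entry_le_entrywise_sup_norm (A s)).trans ((hC s hs).trans (le_max_left _ _))
  set K : ℝ := 2 * N * C' with hK
  set g : ℝ → ℝ := fun s => ∑ i, (min (x s i) 0) ^ 2 with hg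
  set g' : ℝ → ℝ := fun s => ∑ i, 2 * min (x s i) 0 * (A s *ᵥ x s) i with hg'def
  have hxcomp : ∀ s ∈ Icc t T, ∀ i, HasDerivWithinAt (fun s => x s i)
      ((A s *ᵥ x s) i) (Icc t T) s := fun s hs i =>
    (ContinuousLinearMap.proj i : (Fin N → ℝ) →L[ℝ] ℝ).hasFDerivAt.comp_hasDerivWithinAt
      s (hx s hs)
  have hgderiv : ∀ s ∈ Icc t T, HasDerivWithinAt g (g' s) (Icc t T) s := fun s hs =>
    HasDerivWithinAt.fun_sum fun i _ =>
      by have := (negsq_hasDerivAt (x s i)).comp_hasDerivWithinAt s (hxcomp s hs i); exact this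
  have hxc : ContinuousOn x (Icc t T) := fun s hs => (hx s hs).continuousWithinAt
  have hgc : ContinuousOn g (Icc t T) := by
    apply continuousOn_finset_sum
    intro i _
    exact ((continuous_id.min continuous_const).pow 2).comp_continuousOn
      ((continuous_apply i).comp_continuousOn hxc)
  have hgnn : ∀ s, 0 ≤ g s := fun s => Finset.sum_nonneg fun i _ => sq_nonneg _
  -- key bound
  have hbound : ∀ s ∈ Icc t T, g' s ≤ K * g s := by
    intro s hs
    have key : ∀ i j : Fin N,
        2 * min (x s i) 0 * (A s i j * x s j)
          ≤ C' * ((min (x s i) 0) ^ 2 + (min (x s j) 0) ^ 2) := by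
      intro i j
      set mi := min (x s i) 0 with hmi
      set mj := min (x s j) 0 with hmj
      have hmi0 : mi ≤ 0 := min_le_right _ _
      have hmj0 : mj ≤ 0 := min_le_right _ _
      have hAle : |A s i j| ≤ C' := hentry s hs i j
      have hA1 : A s i j ≤ C' := (le_abs_self _).trans hAle
      have hA2 : -C' ≤ A s i j := neg_le_of_abs_le hAle
      rcases eq_or_ne i j with rfl | hij
      · have hmx : mi * x s i = mi ^ 2 := by
          rcases le_or_gt (x s i) 0 with h | h
          · rw [hmi, min_eq_left h]; ring
          · rw [hmi, min_eq_right h.le]; ring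
        have heq : 2 * mi * (A s i i * x s i) = 2 * A s i i * mi ^ 2 := by
          rw [mul_assoc, mul_comm (A s i i) (x s i), ← mul_assoc mi, hmx]; ring
        rw [heq]
        nlinarith [sq_nonneg mi]
      · have hA0 : 0 ≤ A s i j := hAoff s hs i j hij
        have hpj : 0 ≤ max (x s j) 0 := le_max_right _ _
        have hsplit : x s j = max (x s j) 0 + mj := by
          rw [hmj]; rcases le_or_gt (x s j) 0 with h | h
          · rw [min_eq_left h, max_eq_right h]; ring
          · rw [min_eq_right h.le, max_eq_left h.le]; ring
        rw [hsplit]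
        nlinarith [mul_nonneg (mul_nonneg hA0 hpj) (neg_nonneg.2 hmi0),
          sq_nonneg (mi - mj), sq_nonneg (mi + mj),
          mul_nonneg hA0 (sq_nonneg (mi + mj)), mul_nonneg hA0 (sq_nonneg (mi - mj)),
          mul_nonneg (sub_nonneg.2 hA1) (sq_nonneg (mi - mj)),
          mul_nonneg (sub_nonneg.2 hA1) (sq_nonneg (mi + mj))]
    calc g' s = ∑ i, ∑ j, 2 * min (x s i) 0 * (A s i j * x s j) := by
          refine Finset.sum_congr rfl fun i _ => ?_
          rw [Matrix.mulVec, dotProduct, Finset.mul_sum]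
      _ ≤ ∑ i, ∑ j, C' * ((min (x s i) 0) ^ 2 + (min (x s j) 0) ^ 2) :=
          Finset.sum_le_sum fun i _ => Finset.sum_le_sum fun j _ => key i j
      _ = K * g s := by
          have h1 : ∀ i : Fin N, ∑ j, C' * ((min (x s i) 0) ^ 2 + (min (x s j) 0) ^ 2)
              = C' * ((N : ℝ) * (min (x s i) 0) ^ 2 + g s) := by
            intro i
            rw [← Finset.mul_sum, Finset.sum_add_distrib, Finset.sum_const, Finset.card_univ]
            simp [hg, nsmul_eq_mul]
          rw [Finset.sum_congr rfl fun i _ => h1 i, ← Finset.mul_sum,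
            Finset.sum_add_distrib, Finset.sum_const, Finset.card_univ, ← Finset.mul_sum]
          simp only [hg, hK, nsmul_eq_mul, Fintype.card_fin]
          ring
  -- Gronwall
  have hgron : ∀ s ∈ Icc t T, g s ≤ gronwallBound 0 K 0 (s - t) := by
    apply le_gronwallBound_of_liminf_deriv_right_le hgc
    · intro s hs r hr
      have hder := hgderiv s (Ico_subset_Icc_self hs)
      have htend : Tendsto (slope g s) (nhdsWithin s (Icc t T \ {s})) (nhds (g' s)) :=
        hasDerivWithinAt_iff_tendsto_slope.1 hder
      have hsub : Ioc s T ⊆ Icc t T \ {s} := fun z hz =>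
        ⟨⟨hs.1.trans hz.1.le, hz.2⟩, ne_of_gt hz.1⟩
      have htend2 : Tendsto (slope g s) (nhdsWithin s (Ioi s)) (nhds (g' s)) := by
        rw [← nhdsWithin_Ioc_eq_nhdsGT hs.2]
        exact htend.mono_left (nhdsWithin_mono s hsub)
      have hev : ∀ᶠ z in nhdsWithin s (Ioi s), slope g s z < r :=
        htend2.eventually_lt_const hr
      refine hev.frequently.mono fun z hz => ?_
      rwa [slope_def_field, div_eq_inv_mul] at hz
    · have : g t = 0 := by
        refine Finset.sum_eq_zero fun i _ => ?_
        rw [min_eq_right (hx0 i)]; ring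
      simp [this]
    · intro s hs
      simpa using hbound s (Ico_subset_Icc_self hs)
  intro s hs i
  have h0 : g s = 0 := le_antisymm (by simpa [gronwallBound_ε0_δ0] using hgron s hs) (hgnn s)
  have : (min (x s i) 0) ^ 2 = 0 := by
    have := (Finset.sum_eq_zero_iff_of_nonneg (fun j _ => sq_nonneg (min (x s j) 0))).1 h0
      i (Finset.mem_univ i)
    exact this
  have hmin : min (x s i) 0 = 0 := by
    nlinarith [sq_nonneg (min (x s i) 0)]
  calc (0:ℝ) = min (x s i) 0 := hmin.symm
    _ ≤ x s i := min_le_left _ _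
end

section
/- Let d, k ≥ 1, m ≥ 0, let (A, d_A) be a Polish metric space with base point a_0, and let S be a finite set. Let F : ℝ^d × A × ℝ^k × S → ℝ^d be a function that is Lipschitz in its ℝ^k variable uniformly with respect to the other variables, with Lipschitz constant L_F, and let ψ_1, …, ψ_k : ℝ^d × A → ℝ be measurable with |ψ_j(y,a)| ≤ C (1 + |y| + d_A(a, a_0))^m for all j. For a probability measure ν on ℝ^d × A integrating all ψ_j, set h(y, ν, a, i) := F(y, a, ∫ψ_1 dν, …, ∫ψ_k dν, i). Let r ≥ 2m. Then there exists L ≥ 0, depending only on L_F, C, k, m, such that for every ρ ∈ P_r(ℝ^d × A) and all probability measures ν_1, ν_2 absolutely continuous with respect to ρ with respective densities φ_1, φ_2 ∈ L²(ρ), one has |h(y, ν_1, a, i) − h(y, ν_2, a, i)| ≤ L (∫ |φ_1 − φ_2|² dρ)^{1/2} (1 + ‖ρ‖_{W_r}^m) for all y ∈ ℝ^d, a ∈ A, i ∈ S. -/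
open MeasureTheory

/-- Jensen for concave rpow on a probability measure. -/
lemma jensen_rpow {α : Type*} [MeasurableSpace α] (μ : Measure α) [IsProbabilityMeasure μ]
    {f : α → ℝ} (hf0 : ∀ x, 0 ≤ f x) (hfm : AEStronglyMeasurable f μ) (hfi : Integrable f μ)
    {θ : ℝ} (hθ0 : 0 ≤ θ) (hθ1 : θ ≤ 1) :
    ∫ x, f x ^ θ ∂μ ≤ (∫ x, f x ∂μ) ^ θ := by
  rcases eq_or_lt_of_le hθ0 with h0 | hθ0'
  · simp [← h0]
  set M := ∫ x, f x ∂μ with hM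
  have hM0 : 0 ≤ M := integral_nonneg hf0
  rcases eq_or_lt_of_le hM0 with hMe | hMpos
  · -- M = 0 : f = 0 a.e.
    have hfz : f =ᵐ[μ] 0 := (integral_eq_zero_iff_of_nonneg hf0 hfi).mp hMe.symm
    have : (fun x => f x ^ θ) =ᵐ[μ] 0 := by
      filter_upwards [hfz] with x hx
      simp [hx, Real.zero_rpow (ne_of_gt hθ0')]
    rw [integral_congr_ae this]
    simp [← hMe, Real.zero_rpow (ne_of_gt hθ0'), integral_zero]
  · -- M > 0 : tangent-line trick
    have key : ∀ x, f x ^ θ ≤ M ^ θ * (1 - θ) + (M ^ θ * θ / M) * f x := by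
      intro x
      have hu : -1 ≤ f x / M - 1 := by
        have : 0 ≤ f x / M := div_nonneg (hf0 x) hM0
        linarith
      have hB := rpow_one_add_le_one_add_mul_self hu hθ0 hθ1
      rw [add_sub_cancel] at hB
      have hfxM : (f x / M) ^ θ = f x ^ θ / M ^ θ := Real.div_rpow (hf0 x) hM0 θ
      rw [hfxM] at hB
      have hMθ : 0 < M ^ θ := Real.rpow_pos_of_pos hMpos θ
      have := mul_le_mul_of_nonneg_left hB (le_of_lt hMθ)
      rw [mul_div_cancel₀ _ (ne_of_gt hMθ)] at this
      calc f x ^ θ ≤ M ^ θ * (1 + θ * (f x / M - 1)) := this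
        _ = M ^ θ * (1 - θ) + (M ^ θ * θ / M) * f x := by
            field_simp
            ring
    have hgi : Integrable (fun x => M ^ θ * (1 - θ) + (M ^ θ * θ / M) * f x) μ :=
      (integrable_const _).add (hfi.const_mul _)
    have hle : ∫ x, f x ^ θ ∂μ ≤ ∫ x, (M ^ θ * (1 - θ) + (M ^ θ * θ / M) * f x) ∂μ := by
      refine integral_mono_of_nonneg ?_ hgi ?_
      · exact Filter.Eventually.of_forall fun x => Real.rpow_nonneg (hf0 x) θ
      · exact Filter.Eventually.of_forall key
    calc ∫ x, f x ^ θ ∂μ ≤ ∫ x, (M ^ θ * (1 - θ) + (M ^ θ * θ / M) * f x) ∂μ := hle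
      _ = M ^ θ * (1 - θ) + (M ^ θ * θ / M) * M := by
          rw [integral_add (integrable_const _) (hfi.const_mul _), integral_const,
            integral_const_mul, ← hM]
          simp
      _ = M ^ θ := by field_simp; ring

/-- Cauchy–Schwarz for integrals of real functions. -/
lemma cauchy_schwarz_int {α : Type*} [MeasurableSpace α] {μ : Measure α}
    {f g : α → ℝ} (hf : MemLp f 2 μ) (hg : MemLp g 2 μ) :
    |∫ x, f x * g x ∂μ| ≤ (∫ x, f x ^ 2 ∂μ) ^ ((1:ℝ)/2) * (∫ x, g x ^ 2 ∂μ) ^ ((1:ℝ)/2) := by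
  have hfg : Integrable (fun x => f x * g x) μ := by
    have hf2 : Integrable (fun x => f x ^ 2) μ := (memLp_two_iff_integrable_sq hf.1).mp hf
    have hg2 : Integrable (fun x => g x ^ 2) μ := (memLp_two_iff_integrable_sq hg.1).mp hg
    refine Integrable.mono' ((hf2.add hg2).div_const 2) (hf.1.mul hg.1) ?_
    refine Filter.Eventually.of_forall fun x => ?_
    simp only [Pi.add_apply, Real.norm_eq_abs, abs_mul]
    nlinarith [sq_nonneg (|f x| - |g x|), sq_abs (f x), sq_abs (g x), abs_nonneg (f x), abs_nonneg (g x)]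
  have habs : |∫ x, f x * g x ∂μ| ≤ ∫ x, |f x| * |g x| ∂μ := by
    simpa [Real.norm_eq_abs, abs_mul] using norm_integral_le_integral_norm (μ := μ) (fun x => f x * g x)
  have h22 : Real.HolderConjugate 2 2 := Real.HolderConjugate.two_two
  have hof : ENNReal.ofReal (2:ℝ) = (2 : ENNReal) := by norm_num
  have hCS := integral_mul_le_Lp_mul_Lq_of_nonneg h22
    (Filter.Eventually.of_forall fun x => abs_nonneg (f x))
    (Filter.Eventually.of_forall fun x => abs_nonneg (g x))
    (by rw [hof]; exact hf.abs) (by rw [hof]; exact hg.abs)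
  simp only [Real.rpow_two, sq_abs] at hCS
  exact habs.trans hCS

lemma l2_mul_integrable {α : Type*} [MeasurableSpace α] {μ : Measure α}
    {f g : α → ℝ} (hf : MemLp f 2 μ) (hg : MemLp g 2 μ) :
    Integrable (fun x => f x * g x) μ := by
  have hf2 : Integrable (fun x => f x ^ 2) μ := (memLp_two_iff_integrable_sq hf.1).mp hf
  have hg2 : Integrable (fun x => g x ^ 2) μ := (memLp_two_iff_integrable_sq hg.1).mp hg
  refine Integrable.mono' ((hf2.add hg2).div_const 2) (hf.1.mul hg.1) ?_
  refine Filter.Eventually.of_forall fun x => ?_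
  simp only [Pi.add_apply, Real.norm_eq_abs, abs_mul]
  nlinarith [sq_nonneg (|f x| - |g x|), sq_abs (f x), sq_abs (g x), abs_nonneg (f x), abs_nonneg (g x)]

lemma integral_withDensity_ofReal {α : Type*} [MeasurableSpace α] {μ : Measure α}
    {φ : α → ℝ} (hφm : Measurable φ) (hφ0 : ∀ x, 0 ≤ φ x) (g : α → ℝ) :
    ∫ x, g x ∂(μ.withDensity fun x => ENNReal.ofReal (φ x)) = ∫ x, φ x * g x ∂μ := by
  have h1 : (fun x => ENNReal.ofReal (φ x)) = fun x => ((φ x).toNNReal : ENNReal) := rfl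
  rw [h1, integral_withDensity_eq_integral_smul hφm.real_toNNReal g]
  refine integral_congr_ae (Filter.Eventually.of_forall fun x => ?_)
  simp [NNReal.smul_def, Real.coe_toNNReal _ (hφ0 x)]

set_option maxHeartbeats 1000000

/-- Cylindrical coefficients
`h(y,ν,a,i) = F(y, a, ∫ψ₁ dν, …, ∫ψ_k dν, i)`, with `F` Lipschitz in its `ℝ^k` variable
(Euclidean norm) and `ψ_j` of polynomial growth of order `m`, satisfy the density-Lipschitz
assumption (A.2) with `χ(z) = z^m`, for `r ≥ 2m`: there is `L ≥ 0` such that for every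
`ρ ∈ P_r(ℝ^d × A)` and probability measures `ν₁, ν₂` with densities `φ₁, φ₂ ∈ L²(ρ)`,
`|h(y,ν₁,a,i) − h(y,ν₂,a,i)| ≤ L (∫|φ₁−φ₂|² dρ)^{1/2} (1 + ‖ρ‖_{W_r}^m)`. -/
theorem stmt9
    {d k : ℕ} (hd : 1 ≤ d) (hk : 1 ≤ k) {m : ℝ} (hm : 0 ≤ m)
    {A : Type*} [MetricSpace A] [TopologicalSpace.SeparableSpace A] [CompleteSpace A]
    [MeasurableSpace A] [BorelSpace A] (a₀ : A)
    {S : Type*} [Finite S]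
    (F : EuclideanSpace ℝ (Fin d) → A → (Fin k → ℝ) → S → EuclideanSpace ℝ (Fin d))
    (LF : ℝ)
    (hF : ∀ y a i z z', ‖F y a z i - F y a z' i‖ ≤ LF * Real.sqrt (∑ j, (z j - z' j) ^ 2))
    (C : ℝ) (hC : 0 ≤ C)
    (ψ : Fin k → EuclideanSpace ℝ (Fin d) × A → ℝ)
    (hψm : ∀ j, Measurable (ψ j))
    (hψ : ∀ j (y : EuclideanSpace ℝ (Fin d)) (a : A),
      |ψ j (y, a)| ≤ C * (1 + ‖y‖ + dist a a₀) ^ m)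
    {r : ℝ} (hr1 : 1 ≤ r) (hr : 2 * m ≤ r) :
    ∃ L : ℝ, 0 ≤ L ∧
      ∀ ρ : Measure (EuclideanSpace ℝ (Fin d) × A), IsProbabilityMeasure ρ →
        Integrable (fun z => (‖z.1‖ + dist z.2 a₀) ^ r) ρ →
        ∀ φ₁ φ₂ : EuclideanSpace ℝ (Fin d) × A → ℝ,
          Measurable φ₁ → Measurable φ₂ → (∀ z, 0 ≤ φ₁ z) → (∀ z, 0 ≤ φ₂ z) →
          MemLp φ₁ 2 ρ → MemLp φ₂ 2 ρ →
          ∀ ν₁ ν₂ : Measure (EuclideanSpace ℝ (Fin d) × A),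
            IsProbabilityMeasure ν₁ → IsProbabilityMeasure ν₂ →
            ν₁ = ρ.withDensity (fun z => ENNReal.ofReal (φ₁ z)) →
            ν₂ = ρ.withDensity (fun z => ENNReal.ofReal (φ₂ z)) →
            ∀ (y : EuclideanSpace ℝ (Fin d)) (a : A) (i : S),
              ‖F y a (fun j => ∫ z, ψ j z ∂ν₁) i - F y a (fun j => ∫ z, ψ j z ∂ν₂) i‖
                ≤ L * (∫ z, (φ₁ z - φ₂ z) ^ 2 ∂ρ) ^ ((1:ℝ) / 2)
                  * (1 + ((∫ z, (‖z.1‖ + dist z.2 a₀) ^ r ∂ρ) ^ (1 / r)) ^ m) := by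
  classical
  set t : EuclideanSpace ℝ (Fin d) × A → ℝ := fun z => ‖z.1‖ + dist z.2 a₀ with ht_def
  have htc : Continuous t := (continuous_fst.norm).add (continuous_snd.dist continuous_const)
  have htm : Measurable t := htc.measurable
  have ht0 : ∀ z, 0 ≤ t z := fun z => add_nonneg (norm_nonneg _) dist_nonneg
  have hr0 : (0:ℝ) < r := lt_of_lt_of_le one_pos hr1
  have h2m0 : 0 ≤ 2 * m := by linarith
  refine ⟨max LF 0 * Real.sqrt k * (C * (2:ℝ) ^ m), ?_, ?_⟩
  · have : (0:ℝ) ≤ (2:ℝ) ^ m := (Real.rpow_pos_of_pos two_pos m).le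
    positivity
  intro ρ hρ hint φ₁ φ₂ hφ₁m hφ₂m hφ₁0 hφ₂0 hφ₁L hφ₂L ν₁ ν₂ hν₁ hν₂ hν₁e hν₂e y a i
  set M := ∫ z, t z ^ r ∂ρ with hM_def
  have hM0 : 0 ≤ M := integral_nonneg fun z => Real.rpow_nonneg (ht0 z) r
  set Q : ℝ := (M ^ (1/r)) ^ m with hQ_def
  have hQ0 : 0 ≤ Q := Real.rpow_nonneg (Real.rpow_nonneg hM0 _) _
  set B : ℝ := C * (2:ℝ) ^ m * (1 + Q) with hB_def
  have h2m : (0:ℝ) < (2:ℝ) ^ m := Real.rpow_pos_of_pos two_pos m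
  have hB0 : 0 ≤ B := by positivity
  set D : ℝ := (∫ z, (φ₁ z - φ₂ z) ^ 2 ∂ρ) ^ ((1:ℝ)/2) with hD_def
  have hD0 : 0 ≤ D :=
    Real.rpow_nonneg (integral_nonneg fun z => sq_nonneg _) _
  -- pointwise bound t^{2m} ≤ 1 + t^r
  have hpt : ∀ z, t z ^ (2*m) ≤ 1 + t z ^ r := by
    intro z
    rcases le_or_gt (t z) 1 with h | h
    · have : t z ^ (2*m) ≤ 1 := Real.rpow_le_one (ht0 z) h h2m0
      have h2 : 0 ≤ t z ^ r := Real.rpow_nonneg (ht0 z) r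
      linarith
    · have : t z ^ (2*m) ≤ t z ^ r := Real.rpow_le_rpow_of_exponent_le h.le hr
      linarith
  -- integrability of t ^ (2m)
  have htm2meas : Measurable fun z => t z ^ (2*m) := by fun_prop
  have hint2m : Integrable (fun z => t z ^ (2*m)) ρ := by
    refine Integrable.mono' ((integrable_const 1).add hint) htm2meas.aestronglyMeasurable ?_
    refine Filter.Eventually.of_forall fun z => ?_
    rw [Real.norm_eq_abs, abs_of_nonneg (Real.rpow_nonneg (ht0 z) _)]
    exact hpt z
  -- Jensen: ∫ t^{2m} ≤ M^{2m/r} = Q^2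
  have hjensen : ∫ z, t z ^ (2*m) ∂ρ ≤ Q ^ 2 := by
    have hθ0 : 0 ≤ 2*m/r := div_nonneg h2m0 hr0.le
    have hθ1 : 2*m/r ≤ 1 := (div_le_one hr0).mpr hr
    have h1 := jensen_rpow ρ (f := fun z => t z ^ r)
      (fun z => Real.rpow_nonneg (ht0 z) r) hint.aestronglyMeasurable hint hθ0 hθ1
    have h2 : ∀ z, (t z ^ r) ^ (2*m/r) = t z ^ (2*m) := by
      intro z
      rw [← Real.rpow_mul (ht0 z)]
      congr 1
      field_simp
    have h3 : M ^ (2*m/r) = Q ^ 2 := by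
      rw [hQ_def, ← Real.rpow_natCast ((M ^ (1/r)) ^ m) 2, ← Real.rpow_mul hM0,
        ← Real.rpow_mul hM0]
      norm_num
      congr 1
      field_simp
    calc ∫ z, t z ^ (2*m) ∂ρ = ∫ z, (t z ^ r) ^ (2*m/r) ∂ρ := by
          exact integral_congr_ae (Filter.Eventually.of_forall fun z => (h2 z).symm)
      _ ≤ M ^ (2*m/r) := h1
      _ = Q ^ 2 := h3
  -- pointwise square bound for ψ
  have hψpt : ∀ j z, ψ j z ^ 2 ≤ C^2 * ((2:ℝ)^m)^2 * (1 + t z ^ (2*m)) := by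
    intro j z
    have hb : |ψ j z| ≤ C * (1 + t z) ^ m := by
      have hb0 := hψ j z.1 z.2
      rw [add_assoc] at hb0
      simpa [ht_def] using hb0
    have ht1 : (0:ℝ) ≤ 1 + t z := by linarith [ht0 z]
    have hsq : ψ j z ^ 2 ≤ (C * (1 + t z) ^ m) ^ 2 := by
      rw [← sq_abs]
      exact pow_le_pow_left₀ (abs_nonneg _) hb 2
    have hpow : ((1 + t z) ^ m) ^ 2 = (1 + t z) ^ (2*m) := by
      rw [← Real.rpow_natCast ((1 + t z) ^ m) 2, ← Real.rpow_mul ht1]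
      norm_num
      ring_nf
    have hexp : (1 + t z) ^ (2*m) ≤ (2:ℝ)^(2*m) * (1 + t z ^ (2*m)) := by
      have h2nn : (0:ℝ) ≤ (2:ℝ)^(2*m) := (Real.rpow_pos_of_pos two_pos _).le
      have htznn : 0 ≤ t z ^ (2*m) := Real.rpow_nonneg (ht0 z) _
      rcases le_or_gt (t z) 1 with h | h
      · have h1 : (1 + t z) ^ (2*m) ≤ (2:ℝ)^(2*m) :=
          Real.rpow_le_rpow ht1 (by linarith) h2m0
        nlinarith
      · have h1 : (1 + t z) ^ (2*m) ≤ (2 * t z) ^ (2*m) :=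
          Real.rpow_le_rpow ht1 (by linarith) h2m0
        have h2 : (2 * t z) ^ (2*m) = (2:ℝ)^(2*m) * t z ^ (2*m) :=
          Real.mul_rpow (by norm_num) (ht0 z)
        nlinarith
    have h22 : ((2:ℝ)^m)^2 = (2:ℝ)^(2*m) := by
      rw [← Real.rpow_natCast ((2:ℝ) ^ m) 2, ← Real.rpow_mul (by norm_num)]
      norm_num
      ring_nf
    calc ψ j z ^ 2 ≤ (C * (1 + t z) ^ m) ^ 2 := hsq
      _ = C^2 * ((1 + t z) ^ m) ^ 2 := by ring
      _ = C^2 * (1 + t z) ^ (2*m) := by rw [hpow]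
      _ ≤ C^2 * ((2:ℝ)^(2*m) * (1 + t z ^ (2*m))) := by
          exact mul_le_mul_of_nonneg_left hexp (by positivity)
      _ = C^2 * ((2:ℝ)^m)^2 * (1 + t z ^ (2*m)) := by rw [h22]; ring
  -- integrability and L² bound of ψ j
  have hdom : Integrable (fun z => C^2 * ((2:ℝ)^m)^2 * (1 + t z ^ (2*m))) ρ :=
    (((integrable_const 1).add hint2m).const_mul _)
  have hψsqInt : ∀ j, Integrable (fun z => ψ j z ^ 2) ρ := by
    intro j
    refine Integrable.mono' hdom ((hψm j).pow_const 2).aestronglyMeasurable ?_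
    refine Filter.Eventually.of_forall fun z => ?_
    rw [Real.norm_eq_abs, abs_of_nonneg (sq_nonneg _)]
    exact hψpt j z
  have hψL : ∀ j, MemLp (ψ j) 2 ρ := fun j =>
    (memLp_two_iff_integrable_sq (hψm j).aestronglyMeasurable).mpr (hψsqInt j)
  have hψint_bound : ∀ j, ∫ z, ψ j z ^ 2 ∂ρ ≤ B ^ 2 := by
    intro j
    have h1 : ∫ z, ψ j z ^ 2 ∂ρ ≤ ∫ z, C^2 * ((2:ℝ)^m)^2 * (1 + t z ^ (2*m)) ∂ρ := by
      refine integral_mono_of_nonneg (Filter.Eventually.of_forall fun z => sq_nonneg _) hdom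
        (Filter.Eventually.of_forall fun z => hψpt j z)
    have h2 : ∫ z, C^2 * ((2:ℝ)^m)^2 * (1 + t z ^ (2*m)) ∂ρ
        = C^2 * ((2:ℝ)^m)^2 * (1 + ∫ z, t z ^ (2*m) ∂ρ) := by
      rw [integral_const_mul, integral_add (integrable_const 1) hint2m]
      simp
    have h3 : C^2 * ((2:ℝ)^m)^2 * (1 + ∫ z, t z ^ (2*m) ∂ρ)
        ≤ C^2 * ((2:ℝ)^m)^2 * (1 + Q^2) := by
      refine mul_le_mul_of_nonneg_left (by linarith [hjensen]) (by positivity)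
    have h4 : C^2 * ((2:ℝ)^m)^2 * (1 + Q^2) ≤ B ^ 2 := by
      rw [hB_def]
      nlinarith [hQ0, sq_nonneg (C * (2:ℝ)^m), h2m.le, hC]
    linarith
  -- the difference of the k integrals
  have hdiff : ∀ j, |(∫ z, ψ j z ∂ν₁) - ∫ z, ψ j z ∂ν₂| ≤ B * D := by
    intro j
    rw [hν₁e, hν₂e, integral_withDensity_ofReal hφ₁m hφ₁0 (ψ j),
      integral_withDensity_ofReal hφ₂m hφ₂0 (ψ j)]
    have hsub : (∫ z, φ₁ z * ψ j z ∂ρ) - ∫ z, φ₂ z * ψ j z ∂ρ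
        = ∫ z, (φ₁ z - φ₂ z) * ψ j z ∂ρ := by
      rw [← integral_sub (l2_mul_integrable hφ₁L (hψL j)) (l2_mul_integrable hφ₂L (hψL j))]
      congr 1
      ext z
      ring
    rw [hsub]
    have hCS := cauchy_schwarz_int (f := fun z => φ₁ z - φ₂ z) (g := ψ j)
      (hφ₁L.sub hφ₂L) (hψL j)
    have hψhalf : (∫ z, ψ j z ^ 2 ∂ρ) ^ ((1:ℝ)/2) ≤ B := by
      have := Real.rpow_le_rpow (integral_nonneg fun z => sq_nonneg _) (hψint_bound j)
        (by norm_num : (0:ℝ) ≤ 1/2)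
      refine this.trans_eq ?_
      rw [← Real.rpow_natCast B 2, ← Real.rpow_mul hB0]
      norm_num
    calc |∫ z, (φ₁ z - φ₂ z) * ψ j z ∂ρ| ≤ D * (∫ z, ψ j z ^ 2 ∂ρ) ^ ((1:ℝ)/2) := hCS
      _ ≤ D * B := mul_le_mul_of_nonneg_left hψhalf hD0
      _ = B * D := mul_comm _ _
  -- sum and square root
  have hsum : Real.sqrt (∑ j, ((∫ z, ψ j z ∂ν₁) - ∫ z, ψ j z ∂ν₂) ^ 2)
      ≤ Real.sqrt k * (B * D) := by
    have h1 : ∑ j, ((∫ z, ψ j z ∂ν₁) - ∫ z, ψ j z ∂ν₂) ^ 2 ≤ (k : ℝ) * (B*D)^2 := by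
      calc ∑ j, ((∫ z, ψ j z ∂ν₁) - ∫ z, ψ j z ∂ν₂) ^ 2
          ≤ ∑ _j : Fin k, (B*D)^2 := by
            refine Finset.sum_le_sum fun j _ => ?_
            have h := abs_le.mp (hdiff j)
            exact sq_le_sq' (by linarith [h.1]) h.2
        _ = (k:ℝ) * (B*D)^2 := by
            simp [Finset.sum_const, Finset.card_univ]
    calc Real.sqrt (∑ j, ((∫ z, ψ j z ∂ν₁) - ∫ z, ψ j z ∂ν₂) ^ 2)
        ≤ Real.sqrt ((k:ℝ) * (B*D)^2) := Real.sqrt_le_sqrt h1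
      _ = Real.sqrt k * (B * D) := by
          rw [Real.sqrt_mul (Nat.cast_nonneg k), Real.sqrt_sq (mul_nonneg hB0 hD0)]
  -- conclude
  have hmax0 : (0:ℝ) ≤ max LF 0 := le_max_right _ _
  calc ‖F y a (fun j => ∫ z, ψ j z ∂ν₁) i - F y a (fun j => ∫ z, ψ j z ∂ν₂) i‖
      ≤ LF * Real.sqrt (∑ j, ((∫ z, ψ j z ∂ν₁) - ∫ z, ψ j z ∂ν₂) ^ 2) := hF y a i _ _
    _ ≤ max LF 0 * Real.sqrt (∑ j, ((∫ z, ψ j z ∂ν₁) - ∫ z, ψ j z ∂ν₂) ^ 2) :=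
        mul_le_mul_of_nonneg_right (le_max_left _ _) (Real.sqrt_nonneg _)
    _ ≤ max LF 0 * (Real.sqrt k * (B * D)) := mul_le_mul_of_nonneg_left hsum hmax0
    _ = max LF 0 * Real.sqrt k * (C * (2:ℝ)^m) * D * (1 + Q) := by
        rw [hB_def]; ring
end

section
/- Let (E, d) be a Polish metric space with base point z_0, let v ≥ 0, C ≥ 0 and q ≥ v + 1, and let ψ : E → ℝ satisfy the local Lipschitz condition |ψ(z) − ψ(z')| ≤ C · d(z, z') · (1 + d(z, z_0) + d(z', z_0))^v for all z, z' ∈ E. Then there exists a constant C', depending only on C, v and q, such that for all ν, ν' ∈ P_q(E): |∫ψ dν − ∫ψ dν'| ≤ C' · W_q(ν, ν') · (1 + ‖ν‖_{W_q}^v + ‖ν'‖_{W_q}^v). -/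
open MeasureTheory ENNReal

/-- The `q`-th power of the `q`-Wasserstein distance on a metric measurable space `E`,
defined as the infimum over couplings of the integral cost `d(z,z')^q`. -/
noncomputable def WqPow {E : Type*} [MetricSpace E] [MeasurableSpace E] (q : ℝ)
    (μ ν : Measure E) : ℝ≥0∞ :=
  ⨅ γ ∈ {γ : Measure (E × E) | γ.map Prod.fst = μ ∧ γ.map Prod.snd = ν},
    ∫⁻ z, ENNReal.ofReal (dist z.1 z.2 ^ q) ∂γ

lemma rpow_add3_le {x y z : ℝ≥0∞} {s : ℝ} (hs : 0 ≤ s) :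
    (x + y + z) ^ s ≤ 3 ^ s * (x ^ s + y ^ s + z ^ s) := by
  have hxyz : x + y + z ≤ 3 * max x (max y z) := by
    have hx : x ≤ max x (max y z) := le_max_left _ _
    have hy : y ≤ max x (max y z) := le_trans (le_max_left _ _) (le_max_right _ _)
    have hz : z ≤ max x (max y z) := le_trans (le_max_right _ _) (le_max_right _ _)
    calc x + y + z ≤ max x (max y z) + max x (max y z) + max x (max y z) := by gcongr
      _ = 3 * max x (max y z) := by ring
  have h3 : (max x (max y z)) ^ s ≤ x ^ s + y ^ s + z ^ s := by
    rcases max_cases x (max y z) with ⟨h, _⟩ | ⟨h, _⟩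
    · rw [h]; exact le_self_add.trans le_self_add
    · rw [h]
      rcases max_cases y z with ⟨h', _⟩ | ⟨h', _⟩
      · rw [h']; exact le_add_self.trans le_self_add
      · rw [h']; exact le_add_self
  calc (x + y + z) ^ s ≤ (3 * max x (max y z)) ^ s := ENNReal.rpow_le_rpow hxyz hs
    _ = 3 ^ s * (max x (max y z)) ^ s := ENNReal.mul_rpow_of_nonneg _ _ hs
    _ ≤ 3 ^ s * (x ^ s + y ^ s + z ^ s) := by exact mul_le_mul_right h3 _

lemma rpow_add2_le {x y : ℝ≥0∞} {s : ℝ} (hs : 0 ≤ s) :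
    (x + y) ^ s ≤ 2 ^ s * (x ^ s + y ^ s) := by
  have hxy : x + y ≤ 2 * max x y := by
    calc x + y ≤ max x y + max x y := by gcongr; exacts [le_max_left _ _, le_max_right _ _]
      _ = 2 * max x y := by ring
  have h3 : (max x y) ^ s ≤ x ^ s + y ^ s := by
    rcases max_cases x y with ⟨h, _⟩ | ⟨h, _⟩
    · rw [h]; exact le_self_add
    · rw [h]; exact le_add_self
  calc (x + y) ^ s ≤ (2 * max x y) ^ s := ENNReal.rpow_le_rpow hxy hs
    _ = 2 ^ s * (max x y) ^ s := ENNReal.mul_rpow_of_nonneg _ _ hs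
    _ ≤ 2 ^ s * (x ^ s + y ^ s) := mul_le_mul_right h3 _

lemma holder_aux {α : Type*} [MeasurableSpace α] {μ : Measure α} [IsProbabilityMeasure μ]
    {F G : α → ℝ≥0∞} (hF : AEMeasurable F μ) (hG : AEMeasurable G μ)
    {v q : ℝ} (hv : 0 ≤ v) (hq : v + 1 ≤ q) :
    ∫⁻ a, F a * G a ^ v ∂μ ≤ (∫⁻ a, F a ^ q ∂μ) ^ (1/q) * (∫⁻ a, G a ^ q ∂μ) ^ (v/q) := by
  have hq0 : (0:ℝ) < q := by linarith
  have e1 : q * (1/q) = 1 := by field_simp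
  have e2 : q * (v/q) = v := by field_simp
  have h := ENNReal.lintegral_prod_norm_pow_le (μ := μ) (Finset.univ : Finset (Fin 3))
      (f := ![fun a => F a ^ q, fun a => G a ^ q, fun _ => 1])
      (p := ![1/q, v/q, 1 - (1+v)/q])
      (by intro i _
          fin_cases i
          · exact (ENNReal.continuous_rpow_const.measurable.comp_aemeasurable hF)
          · exact (ENNReal.continuous_rpow_const.measurable.comp_aemeasurable hG)
          · exact aemeasurable_const)
      (by simp [Fin.sum_univ_three]; field_simp; ring)
      (by intro i _
          fin_cases i
          · exact div_nonneg zero_le_one hq0.le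
          · exact div_nonneg hv hq0.le
          · show (0:ℝ) ≤ 1 - (1+v)/q
            rw [sub_nonneg, div_le_one hq0]; linarith)
  simp only [Fin.prod_univ_three, Matrix.cons_val_zero, Matrix.cons_val_one, Matrix.head_cons,
    Matrix.cons_val_two, Matrix.tail_cons, ENNReal.one_rpow, mul_one] at h
  rw [lintegral_one, measure_univ, ENNReal.one_rpow, mul_one] at h
  calc ∫⁻ a, F a * G a ^ v ∂μ
      = ∫⁻ a, (F a ^ q) ^ (1/q) * (G a ^ q) ^ (v/q) ∂μ := by
        refine lintegral_congr fun a => ?_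
        rw [← ENNReal.rpow_mul, ← ENNReal.rpow_mul, e1, e2, ENNReal.rpow_one]
    _ ≤ (∫⁻ a, F a ^ q ∂μ) ^ (1/q) * (∫⁻ a, G a ^ q ∂μ) ^ (v/q) := h

/-- If `ψ : E → ℝ` satisfies the local Lipschitz bound
`|ψ(z) − ψ(z')| ≤ C d(z,z') (1 + d(z,z₀) + d(z',z₀))^v` with `q ≥ v + 1`, then there is a
constant `C'` (depending only on `C, v, q`) such that for all `ν, ν' ∈ P_q(E)`:
`|∫ψ dν − ∫ψ dν'| ≤ C' W_q(ν,ν') (1 + ‖ν‖_{W_q}^v + ‖ν'‖_{W_q}^v)`. -/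
theorem stmt10
    {E : Type*} [MetricSpace E] [TopologicalSpace.SeparableSpace E] [CompleteSpace E]
    [MeasurableSpace E] [BorelSpace E] (z₀ : E)
    {v C q : ℝ} (hv : 0 ≤ v) (hC : 0 ≤ C) (hq : v + 1 ≤ q)
    (ψ : E → ℝ)
    (hψ : ∀ z z', |ψ z - ψ z'| ≤ C * dist z z' * (1 + dist z z₀ + dist z' z₀) ^ v) :
    ∃ C' : ℝ, ∀ ν ν' : Measure E, IsProbabilityMeasure ν → IsProbabilityMeasure ν' →
      Integrable (fun z => dist z z₀ ^ q) ν → Integrable (fun z => dist z z₀ ^ q) ν' →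
      |(∫ z, ψ z ∂ν) - ∫ z, ψ z ∂ν'|
        ≤ C' * (WqPow q ν ν' ^ (1 / q)).toReal
          * (1 + ((∫ z, dist z z₀ ^ q ∂ν) ^ (1 / q)) ^ v
             + ((∫ z, dist z z₀ ^ q ∂ν') ^ (1 / q)) ^ v) := by
  have hq0 : (0:ℝ) < q := by linarith
  set C₁ := C + 1 with hC₁def
  have hC₁ : 0 < C₁ := by dsimp only [C₁]; linarith
  have hψ₁ : ∀ z z', |ψ z - ψ z'| ≤ C₁ * dist z z' * (1 + dist z z₀ + dist z' z₀) ^ v := by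
    intro z z'
    refine (hψ z z').trans ?_
    have h1 : (0:ℝ) ≤ dist z z' * (1 + dist z z₀ + dist z' z₀) ^ v := by positivity
    nlinarith
  -- continuity of ψ
  have hcψ : Continuous ψ := by
    refine continuous_iff_continuousAt.2 fun z => ?_
    rw [ContinuousAt, tendsto_iff_dist_tendsto_zero]
    have hb : Filter.Tendsto (fun z' => C₁ * dist z' z * (1 + dist z' z₀ + dist z z₀) ^ v)
        (nhds z) (nhds (C₁ * dist z z * (1 + dist z z₀ + dist z z₀) ^ v)) := by
      refine Filter.Tendsto.mul (Filter.Tendsto.mul tendsto_const_nhds ?_) ?_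
      · exact ((continuous_id.dist continuous_const).tendsto z)
      · refine (Continuous.tendsto ?_ z)
        exact (((continuous_const.add (continuous_id.dist continuous_const)).add
            continuous_const).rpow_const (fun x => Or.inr hv))
    rw [dist_self] at hb
    simp only [mul_zero, zero_mul] at hb
    exact squeeze_zero (fun z' => dist_nonneg) (fun z' => by rw [Real.dist_eq]; exact hψ₁ z' z) hb
  -- growth bound
  set M := |ψ z₀| + C₁ * 2 ^ q with hMdef
  have hM : 0 ≤ M := by
    have : (0:ℝ) ≤ 2 ^ q := Real.rpow_nonneg (by norm_num) q
    have := abs_nonneg (ψ z₀); dsimp only [M]; nlinarith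
  have hgrow : ∀ z, |ψ z| ≤ M * (1 + dist z z₀ ^ q) := by
    intro z
    set d := dist z z₀ with hd
    have hd0 : 0 ≤ d := dist_nonneg
    have h1 : |ψ z| ≤ |ψ z₀| + C₁ * d * (1 + d + 0) ^ v := by
      have h2 := hψ₁ z z₀
      rw [dist_self] at h2
      have h3 := abs_sub_abs_le_abs_sub (ψ z) (ψ z₀)
      linarith
    rw [add_zero] at h1
    have h2 : d * (1 + d) ^ v ≤ 2 ^ q * (1 + d ^ q) := by
      have e1 : d * (1+d)^v ≤ (1+d) * (1+d)^v :=
        mul_le_mul_of_nonneg_right (by linarith) (Real.rpow_nonneg (by linarith) v)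
      have e2 : (1+d) * (1+d)^v = (1+d)^(v+1) := by
        rw [Real.rpow_add (by linarith), Real.rpow_one]; ring
      have e3 : (1+d)^(v+1) ≤ (1+d)^q :=
        Real.rpow_le_rpow_of_exponent_le (by linarith) hq
      have e4 : (1+d)^q ≤ (2 * max 1 d)^q := by
        refine Real.rpow_le_rpow (by linarith) ?_ hq0.le
        rcases le_total d 1 with h | h
        · rw [max_eq_left h]; linarith
        · rw [max_eq_right h]; linarith
      have e5 : (2 * max 1 d)^q = 2^q * (max 1 d)^q :=
        Real.mul_rpow (by norm_num) (le_trans zero_le_one (le_max_left 1 d))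
      have e6 : (max 1 d)^q ≤ 1 + d^q := by
        rcases le_total d 1 with h | h
        · rw [max_eq_left h, Real.one_rpow]
          have : 0 ≤ d ^ q := Real.rpow_nonneg hd0 q
          linarith
        · rw [max_eq_right h]
          linarith
      have h2q : (0:ℝ) ≤ 2 ^ q := Real.rpow_nonneg (by norm_num) q
      nlinarith
    have hdq : 0 ≤ d ^ q := Real.rpow_nonneg hd0 q
    have habs := abs_nonneg (ψ z₀)
    dsimp only [M]
    nlinarith [mul_le_mul_of_nonneg_left h2 hC₁.le]
  refine ⟨C₁ * 3 ^ (v + 1), ?_⟩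
  intro ν ν' hν hν' hiν hiν'
  set Iν := ∫ z, dist z z₀ ^ q ∂ν with hIνdef
  set Iν' := ∫ z, dist z z₀ ^ q ∂ν' with hIν'def
  have hIν0 : 0 ≤ Iν := integral_nonneg fun z => Real.rpow_nonneg dist_nonneg q
  have hIν'0 : 0 ≤ Iν' := integral_nonneg fun z => Real.rpow_nonneg dist_nonneg q
  -- dpow and its lintegrals
  have hdmeas : Measurable fun z : E => ENNReal.ofReal (dist z z₀) ^ q :=
    (ENNReal.continuous_rpow_const.comp
      (ENNReal.continuous_ofReal.comp (continuous_id.dist continuous_const))).measurable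
  have hLν : ∫⁻ z, ENNReal.ofReal (dist z z₀) ^ q ∂ν = ENNReal.ofReal Iν := by
    rw [hIνdef, ofReal_integral_eq_lintegral_ofReal hiν
      (Filter.Eventually.of_forall fun z => Real.rpow_nonneg dist_nonneg q)]
    exact lintegral_congr fun z => ENNReal.ofReal_rpow_of_nonneg dist_nonneg hq0.le
  have hLν' : ∫⁻ z, ENNReal.ofReal (dist z z₀) ^ q ∂ν' = ENNReal.ofReal Iν' := by
    rw [hIν'def, ofReal_integral_eq_lintegral_ofReal hiν'
      (Filter.Eventually.of_forall fun z => Real.rpow_nonneg dist_nonneg q)]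
    exact lintegral_congr fun z => ENNReal.ofReal_rpow_of_nonneg dist_nonneg hq0.le
  -- the product coupling shows WqPow is finite
  have hprod_mem : (ν.prod ν') ∈
      {γ : Measure (E × E) | γ.map Prod.fst = ν ∧ γ.map Prod.snd = ν'} := by
    constructor
    · rw [Measure.map_fst_prod]; simp
    · rw [Measure.map_snd_prod]; simp
  have hWtop : WqPow q ν ν' ≠ ⊤ := by
    have hWle : WqPow q ν ν' ≤ ∫⁻ z : E × E, ENNReal.ofReal (dist z.1 z.2 ^ q) ∂(ν.prod ν') :=
      iInf₂_le _ hprod_mem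
    refine ne_top_of_le_ne_top ?_ hWle
    have hb : ∀ z : E × E, ENNReal.ofReal (dist z.1 z.2 ^ q)
        ≤ 2 ^ q * (ENNReal.ofReal (dist z.1 z₀) ^ q + ENNReal.ofReal (dist z.2 z₀) ^ q) := by
      intro z
      rw [← ENNReal.ofReal_rpow_of_nonneg dist_nonneg hq0.le]
      refine le_trans (ENNReal.rpow_le_rpow ?_ hq0.le) (rpow_add2_le hq0.le)
      rw [← ENNReal.ofReal_add dist_nonneg dist_nonneg]
      exact ENNReal.ofReal_le_ofReal (dist_triangle_right _ _ _)
    refine ne_top_of_le_ne_top ?_ (lintegral_mono hb)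
    have e1 : ∫⁻ z : E × E, ENNReal.ofReal (dist z.1 z₀) ^ q ∂(ν.prod ν')
        = ENNReal.ofReal Iν := by
      have h := lintegral_map (μ := ν.prod ν')
        (f := fun z => ENNReal.ofReal (dist z z₀) ^ q) hdmeas measurable_fst
      rw [hprod_mem.1, hLν] at h
      exact h.symm
    have e2 : ∫⁻ z : E × E, ENNReal.ofReal (dist z.2 z₀) ^ q ∂(ν.prod ν')
        = ENNReal.ofReal Iν' := by
      have h := lintegral_map (μ := ν.prod ν')
        (f := fun z => ENNReal.ofReal (dist z z₀) ^ q) hdmeas measurable_snd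
      rw [hprod_mem.2, hLν'] at h
      exact h.symm
    have e3 : ∫⁻ z : E × E, 2 ^ q * (ENNReal.ofReal (dist z.1 z₀) ^ q
        + ENNReal.ofReal (dist z.2 z₀) ^ q) ∂(ν.prod ν')
        = 2 ^ q * (ENNReal.ofReal Iν + ENNReal.ofReal Iν') := by
      rw [lintegral_const_mul' _ _ (ENNReal.rpow_ne_top_of_nonneg hq0.le (by norm_num))]
      congr 1
      rw [lintegral_add_left (show Measurable fun z : E × E =>
        ENNReal.ofReal (dist z.1 z₀) ^ q from hdmeas.comp measurable_fst), e1, e2]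
    rw [e3]
    exact ENNReal.mul_ne_top (ENNReal.rpow_ne_top_of_nonneg hq0.le (by norm_num))
      (ENNReal.add_ne_top.2 ⟨ENNReal.ofReal_ne_top, ENNReal.ofReal_ne_top⟩)
  -- abbreviations for the constant
  set S' : ℝ≥0∞ := 1 + ENNReal.ofReal Iν ^ (v/q) + ENNReal.ofReal Iν' ^ (v/q) with hS'def
  set cK : ℝ≥0∞ := ENNReal.ofReal C₁ * ((3:ℝ≥0∞) ^ (v+1) * S') with hcKdef
  have hS'top : S' ≠ ⊤ := by
    dsimp only [S']
    exact ENNReal.add_ne_top.2 ⟨ENNReal.add_ne_top.2 ⟨one_ne_top,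
      ENNReal.rpow_ne_top_of_nonneg (div_nonneg hv hq0.le) ENNReal.ofReal_ne_top⟩,
      ENNReal.rpow_ne_top_of_nonneg (div_nonneg hv hq0.le) ENNReal.ofReal_ne_top⟩
  have hS'0 : S' ≠ 0 := by
    have h1 : (1:ℝ≥0∞) ≤ S' := le_trans le_self_add le_self_add
    exact (zero_lt_one.trans_le h1).ne'
  have hcK0 : cK ≠ 0 := by
    dsimp only [cK]
    refine mul_ne_zero ?_ (mul_ne_zero ?_ hS'0)
    · simp [ENNReal.ofReal_eq_zero, not_le, hC₁]
    · exact (ENNReal.rpow_pos (by norm_num) (by norm_num)).ne'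
  have hcKtop : cK ≠ ⊤ := by
    dsimp only [cK]
    exact ENNReal.mul_ne_top ENNReal.ofReal_ne_top
      (ENNReal.mul_ne_top (ENNReal.rpow_ne_top_of_nonneg (by linarith) (by norm_num)) hS'top)
  -- per-coupling bound
  have hper : ∀ γ : Measure (E × E), γ.map Prod.fst = ν → γ.map Prod.snd = ν' →
      ENNReal.ofReal |(∫ z, ψ z ∂ν) - ∫ z, ψ z ∂ν'|
        ≤ cK * (∫⁻ z, ENNReal.ofReal (dist z.1 z.2 ^ q) ∂γ) ^ (1/q) := by
    intro γ hγ1 hγ2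
    haveI hγp : IsProbabilityMeasure γ := by
      constructor
      have h : (γ.map Prod.fst) Set.univ = γ Set.univ := by
        rw [Measure.map_apply measurable_fst MeasurableSet.univ, Set.preimage_univ]
      rw [hγ1] at h
      rw [← h]
      exact measure_univ
    have hd1γ : Integrable (fun p : E × E => dist p.1 z₀ ^ q) γ := by
      have h : Integrable (fun z => dist z z₀ ^ q) (γ.map Prod.fst) := hγ1.symm ▸ hiν
      exact h.comp_measurable measurable_fst
    have hd2γ : Integrable (fun p : E × E => dist p.2 z₀ ^ q) γ := by
      have h : Integrable (fun z => dist z z₀ ^ q) (γ.map Prod.snd) := hγ2.symm ▸ hiν'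
      exact h.comp_measurable measurable_snd
    have hψ1γ : Integrable (fun p : E × E => ψ p.1) γ := by
      refine Integrable.mono (((integrable_const_add_iff (c := (1:ℝ))).2 hd1γ).const_mul M)
        ((hcψ.comp continuous_fst).aestronglyMeasurable) ?_
      refine Filter.Eventually.of_forall fun p => ?_
      have h1 := hgrow p.1
      have h2 : 0 ≤ 1 + dist p.1 z₀ ^ q := by positivity
      rw [Real.norm_eq_abs, Real.norm_eq_abs, abs_of_nonneg (by positivity : 0 ≤ M * (1 + dist p.1 z₀ ^ q))]
      exact h1
    have hψ2γ : Integrable (fun p : E × E => ψ p.2) γ := by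
      refine Integrable.mono (((integrable_const_add_iff (c := (1:ℝ))).2 hd2γ).const_mul M)
        ((hcψ.comp continuous_snd).aestronglyMeasurable) ?_
      refine Filter.Eventually.of_forall fun p => ?_
      have h1 := hgrow p.2
      rw [Real.norm_eq_abs, Real.norm_eq_abs, abs_of_nonneg (by positivity : 0 ≤ M * (1 + dist p.2 z₀ ^ q))]
      exact h1
    have e1 : ∫ z, ψ z ∂ν = ∫ p : E × E, ψ p.1 ∂γ := by
      rw [← hγ1]
      exact integral_map measurable_fst.aemeasurable hcψ.aestronglyMeasurable
    have e2 : ∫ z, ψ z ∂ν' = ∫ p : E × E, ψ p.2 ∂γ := by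
      rw [← hγ2]
      exact integral_map measurable_snd.aemeasurable hcψ.aestronglyMeasurable
    have hFmeas : AEMeasurable (fun p : E × E => ENNReal.ofReal (dist p.1 p.2)) γ :=
      (ENNReal.continuous_ofReal.comp continuous_dist).measurable.aemeasurable
    have hGmeas : AEMeasurable
        (fun p : E × E => ENNReal.ofReal (1 + dist p.1 z₀ + dist p.2 z₀)) γ :=
      (ENNReal.continuous_ofReal.comp
        ((continuous_const.add (continuous_fst.dist continuous_const)).add
          (continuous_snd.dist continuous_const))).measurable.aemeasurable
    have step1 : ENNReal.ofReal |(∫ z, ψ z ∂ν) - ∫ z, ψ z ∂ν'|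
        ≤ ENNReal.ofReal C₁ * ∫⁻ p : E × E, ENNReal.ofReal (dist p.1 p.2)
            * ENNReal.ofReal (1 + dist p.1 z₀ + dist p.2 z₀) ^ v ∂γ := by
      rw [e1, e2, ← integral_sub hψ1γ hψ2γ]
      have habs : |∫ p : E × E, (ψ p.1 - ψ p.2) ∂γ| ≤ ∫ p : E × E, |ψ p.1 - ψ p.2| ∂γ := by
        simpa [Real.norm_eq_abs] using
          norm_integral_le_integral_norm (μ := γ) (fun p : E × E => ψ p.1 - ψ p.2)
      calc ENNReal.ofReal |∫ p : E × E, (ψ p.1 - ψ p.2) ∂γ|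
          ≤ ENNReal.ofReal (∫ p : E × E, |ψ p.1 - ψ p.2| ∂γ) := ENNReal.ofReal_le_ofReal habs
        _ = ∫⁻ p : E × E, ENNReal.ofReal |ψ p.1 - ψ p.2| ∂γ :=
            ofReal_integral_eq_lintegral_ofReal (hψ1γ.sub hψ2γ).abs
              (Filter.Eventually.of_forall fun p => abs_nonneg _)
        _ ≤ ∫⁻ p : E × E, ENNReal.ofReal C₁ * (ENNReal.ofReal (dist p.1 p.2)
            * ENNReal.ofReal (1 + dist p.1 z₀ + dist p.2 z₀) ^ v) ∂γ := by
            refine lintegral_mono fun p => ?_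
            refine le_trans (ENNReal.ofReal_le_ofReal (hψ₁ p.1 p.2)) (le_of_eq ?_)
            rw [ENNReal.ofReal_mul (by positivity), ENNReal.ofReal_mul hC₁.le,
              ← ENNReal.ofReal_rpow_of_nonneg (by positivity) hv, mul_assoc]
        _ = ENNReal.ofReal C₁ * ∫⁻ p : E × E, ENNReal.ofReal (dist p.1 p.2)
            * ENNReal.ofReal (1 + dist p.1 z₀ + dist p.2 z₀) ^ v ∂γ :=
            lintegral_const_mul' _ _ ENNReal.ofReal_ne_top
    have step2 := holder_aux (μ := γ) hFmeas hGmeas hv hq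
    have hcost : ∫⁻ p : E × E, ENNReal.ofReal (dist p.1 p.2) ^ q ∂γ
        = ∫⁻ z : E × E, ENNReal.ofReal (dist z.1 z.2 ^ q) ∂γ :=
      lintegral_congr fun p => ENNReal.ofReal_rpow_of_nonneg dist_nonneg hq0.le
    have f1 : ∫⁻ p : E × E, ENNReal.ofReal (dist p.1 z₀) ^ q ∂γ = ENNReal.ofReal Iν := by
      have h := lintegral_map (μ := γ)
        (f := fun z => ENNReal.ofReal (dist z z₀) ^ q) hdmeas measurable_fst
      rw [hγ1, hLν] at h
      exact h.symm
    have f2 : ∫⁻ p : E × E, ENNReal.ofReal (dist p.2 z₀) ^ q ∂γ = ENNReal.ofReal Iν' := by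
      have h := lintegral_map (μ := γ)
        (f := fun z => ENNReal.ofReal (dist z z₀) ^ q) hdmeas measurable_snd
      rw [hγ2, hLν'] at h
      exact h.symm
    have step3 : ∫⁻ p : E × E, ENNReal.ofReal (1 + dist p.1 z₀ + dist p.2 z₀) ^ q ∂γ
        ≤ 3 ^ q * (1 + ENNReal.ofReal Iν + ENNReal.ofReal Iν') := by
      have hptwise : ∀ p : E × E, ENNReal.ofReal (1 + dist p.1 z₀ + dist p.2 z₀) ^ q
          ≤ 3 ^ q * (1 + ENNReal.ofReal (dist p.1 z₀) ^ q + ENNReal.ofReal (dist p.2 z₀) ^ q) := by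
        intro p
        have e : ENNReal.ofReal (1 + dist p.1 z₀ + dist p.2 z₀)
            = 1 + ENNReal.ofReal (dist p.1 z₀) + ENNReal.ofReal (dist p.2 z₀) := by
          rw [ENNReal.ofReal_add (by positivity) dist_nonneg,
            ENNReal.ofReal_add zero_le_one dist_nonneg, ENNReal.ofReal_one]
        rw [e]
        have h := rpow_add3_le (x := (1:ℝ≥0∞)) (y := ENNReal.ofReal (dist p.1 z₀))
          (z := ENNReal.ofReal (dist p.2 z₀)) hq0.le
        rwa [ENNReal.one_rpow] at h
      refine le_trans (lintegral_mono hptwise) ?_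
      rw [lintegral_const_mul' _ _ (ENNReal.rpow_ne_top_of_nonneg hq0.le (by norm_num))]
      refine mul_le_mul_right (le_of_eq ?_) _
      rw [lintegral_add_left (show Measurable fun p : E × E =>
          (1:ℝ≥0∞) + ENNReal.ofReal (dist p.1 z₀) ^ q from
          measurable_const.add (hdmeas.comp measurable_fst)), f2]
      rw [lintegral_add_left (measurable_const : Measurable fun _ : E × E => (1:ℝ≥0∞)), f1]
      rw [lintegral_one, measure_univ]
    have step4 : (∫⁻ p : E × E, ENNReal.ofReal (1 + dist p.1 z₀ + dist p.2 z₀) ^ q ∂γ) ^ (v/q)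
        ≤ 3 ^ (v+1) * S' := by
      refine le_trans (ENNReal.rpow_le_rpow step3 (div_nonneg hv hq0.le)) ?_
      rw [ENNReal.mul_rpow_of_nonneg _ _ (div_nonneg hv hq0.le), ← ENNReal.rpow_mul]
      have e : q * (v/q) = v := by field_simp
      rw [e]
      have h2 : ((1:ℝ≥0∞) + ENNReal.ofReal Iν + ENNReal.ofReal Iν') ^ (v/q)
          ≤ 3 ^ (v/q) * S' := by
        rw [hS'def]
        have h := rpow_add3_le (x := (1:ℝ≥0∞)) (y := ENNReal.ofReal Iν)
          (z := ENNReal.ofReal Iν') (div_nonneg hv hq0.le)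
        rwa [ENNReal.one_rpow] at h
      calc (3:ℝ≥0∞) ^ v * ((1:ℝ≥0∞) + ENNReal.ofReal Iν + ENNReal.ofReal Iν') ^ (v/q)
          ≤ 3 ^ v * (3 ^ (v/q) * S') := mul_le_mul_right h2 _
        _ = (3 ^ v * 3 ^ (v/q)) * S' := by ring
        _ ≤ 3 ^ (v+1) * S' := by
            refine mul_le_mul_left ?_ _
            rw [← ENNReal.rpow_add _ _ (by norm_num) (by norm_num)]
            refine ENNReal.rpow_le_rpow_of_exponent_le (by norm_num) ?_
            have : v / q ≤ 1 := by rw [div_le_one hq0]; linarith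
            linarith
    calc ENNReal.ofReal |(∫ z, ψ z ∂ν) - ∫ z, ψ z ∂ν'|
        ≤ ENNReal.ofReal C₁ * ∫⁻ p : E × E, ENNReal.ofReal (dist p.1 p.2)
            * ENNReal.ofReal (1 + dist p.1 z₀ + dist p.2 z₀) ^ v ∂γ := step1
      _ ≤ ENNReal.ofReal C₁
          * ((∫⁻ p : E × E, ENNReal.ofReal (dist p.1 p.2) ^ q ∂γ) ^ (1/q)
            * (∫⁻ p : E × E, ENNReal.ofReal (1 + dist p.1 z₀ + dist p.2 z₀) ^ q ∂γ) ^ (v/q)) :=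
          mul_le_mul_right step2 _
      _ ≤ ENNReal.ofReal C₁
          * ((∫⁻ p : E × E, ENNReal.ofReal (dist p.1 p.2) ^ q ∂γ) ^ (1/q)
            * (3 ^ (v+1) * S')) := mul_le_mul_right (mul_le_mul_right step4 _) _
      _ = cK * (∫⁻ z : E × E, ENNReal.ofReal (dist z.1 z.2 ^ q) ∂γ) ^ (1/q) := by
          rw [← hcost, hcKdef]; ring
  -- take the infimum
  have hmain : ENNReal.ofReal |(∫ z, ψ z ∂ν) - ∫ z, ψ z ∂ν'|
      ≤ cK * (WqPow q ν ν') ^ (1/q) := by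
    set a := ENNReal.ofReal |(∫ z, ψ z ∂ν) - ∫ z, ψ z ∂ν'| with hadef
    have hWge : (a / cK) ^ q ≤ WqPow q ν ν' := by
      refine le_iInf₂ fun γ hγ => ?_
      have h1 := hper γ hγ.1 hγ.2
      have h2 : a / cK ≤ (∫⁻ z, ENNReal.ofReal (dist z.1 z.2 ^ q) ∂γ) ^ (1/q) := by
        rw [ENNReal.div_le_iff_le_mul (Or.inl hcK0) (Or.inl hcKtop)]
        rw [mul_comm] at h1; exact h1
      calc (a / cK) ^ q ≤ ((∫⁻ z, ENNReal.ofReal (dist z.1 z.2 ^ q) ∂γ) ^ (1/q)) ^ q :=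
            ENNReal.rpow_le_rpow h2 hq0.le
        _ = ∫⁻ z, ENNReal.ofReal (dist z.1 z.2 ^ q) ∂γ := by
            rw [← ENNReal.rpow_mul, one_div, inv_mul_cancel₀ hq0.ne', ENNReal.rpow_one]
    have h3 : a / cK ≤ (WqPow q ν ν') ^ (1/q) := by
      have := ENNReal.rpow_le_rpow hWge (by positivity : (0:ℝ) ≤ 1/q)
      rwa [← ENNReal.rpow_mul, mul_one_div, div_self hq0.ne', ENNReal.rpow_one] at this
    calc a = cK * (a / cK) := (ENNReal.mul_div_cancel hcK0 hcKtop).symm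
      _ ≤ cK * (WqPow q ν ν') ^ (1/q) := mul_le_mul_right h3 _
  -- convert to real numbers
  have hWq_top : (WqPow q ν ν') ^ (1/q) ≠ ⊤ :=
    ENNReal.rpow_ne_top_of_nonneg (by positivity) hWtop
  have hRHS_top : cK * (WqPow q ν ν') ^ (1/q) ≠ ⊤ := ENNReal.mul_ne_top hcKtop hWq_top
  have hfin := (ENNReal.toReal_le_toReal ENNReal.ofReal_ne_top hRHS_top).2 hmain
  rw [ENNReal.toReal_ofReal (abs_nonneg _)] at hfin
  rw [ENNReal.toReal_mul] at hfin
  have hcKreal : cK.toReal = C₁ * (3 ^ (v+1) * (1 + Iν ^ (v/q) + Iν' ^ (v/q))) := by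
    dsimp only [cK, S']
    rw [ENNReal.toReal_mul, ENNReal.toReal_mul, ENNReal.toReal_add, ENNReal.toReal_add]
    · rw [ENNReal.toReal_ofReal hC₁.le, ENNReal.toReal_one,
        ← ENNReal.toReal_rpow, ← ENNReal.toReal_rpow, ← ENNReal.toReal_rpow,
        ENNReal.toReal_ofReal hIν0, ENNReal.toReal_ofReal hIν'0]
      norm_num
    · exact one_ne_top
    · exact ENNReal.rpow_ne_top_of_nonneg (div_nonneg hv hq0.le) ENNReal.ofReal_ne_top
    · exact ENNReal.add_ne_top.2 ⟨one_ne_top,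
        ENNReal.rpow_ne_top_of_nonneg (div_nonneg hv hq0.le) ENNReal.ofReal_ne_top⟩
    · exact ENNReal.rpow_ne_top_of_nonneg (div_nonneg hv hq0.le) ENNReal.ofReal_ne_top
  rw [hcKreal] at hfin
  have hvq : (Iν ^ (1/q)) ^ v = Iν ^ (v/q) := by
    rw [← Real.rpow_mul hIν0]; congr 1; field_simp
  have hvq' : (Iν' ^ (1/q)) ^ v = Iν' ^ (v/q) := by
    rw [← Real.rpow_mul hIν'0]; congr 1; field_simp
  rw [hvq, hvq']
  calc |(∫ z, ψ z ∂ν) - ∫ z, ψ z ∂ν'|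
      ≤ C₁ * (3 ^ (v+1) * (1 + Iν ^ (v/q) + Iν' ^ (v/q))) * ((WqPow q ν ν') ^ (1/q)).toReal :=
        hfin
    _ = C₁ * 3 ^ (v + 1) * ((WqPow q ν ν') ^ (1/q)).toReal
        * (1 + Iν ^ (v/q) + Iν' ^ (v/q)) := by ring
end

section
/- Let d ≥ 1, let (A, d_A) be a Polish metric space with base point a_0, and let F be a Lipschitz function, with Lipschitz constant L_F, from the d×d real matrices (with Frobenius norm) to ℝ^d. For a probability measure ν on ℝ^d × A whose marginal ν̂ on ℝ^d has finite second moment, define Cov(ν) := ∫ z z^T ν̂(dz) − (∫ z ν̂(dz)) (∫ z ν̂(dz))^T, and set h(ν) := F(Cov(ν)). Let r ≥ 4 and q ≥ 2. Then there exists L ≥ 0, depending only on L_F and d, such that for every ρ ∈ P_r(ℝ^d × A) and all ν_1, ν_2 ∈ P_q(ℝ^d × A) absolutely continuous with respect to ρ with respective densities φ_1, φ_2 ∈ L²(ρ): |h(ν_1) − h(ν_2)| ≤ L (∫ |φ_1 − φ_2|² dρ)^{1/2} (1 + ‖ρ‖_{W_r}² + ‖ν_1‖_{W_q}² + ‖ν_2‖_{W_q}²).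 -/
open MeasureTheory
open scoped ENNReal NNReal

open MeasureTheory
open scoped ENNReal NNReal

lemma my_rpow_le_one_add_rpow {x s t : ℝ} (hx : 0 ≤ x) (hs : 0 < s) (hst : s ≤ t) :
    x ^ s ≤ 1 + x ^ t := by
  rcases le_or_gt x 1 with h1 | h1
  · have h2 : x ^ s ≤ 1 := Real.rpow_le_one hx h1 hs.le
    have h3 : (0:ℝ) ≤ x ^ t := Real.rpow_nonneg hx t
    linarith
  · have : x ^ s ≤ x ^ t := Real.rpow_le_rpow_of_exponent_le h1.le hst
    linarith

lemma my_jensen {α : Type*} [MeasurableSpace α] {μ : Measure α} [IsProbabilityMeasure μ]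
    {g : α → ℝ} (hg : ∀ x, 0 ≤ g x) (hm : AEMeasurable g μ)
    {s t : ℝ} (hs : 0 < s) (hst : s ≤ t)
    (hint : Integrable (fun x => g x ^ t) μ) :
    ∫ x, g x ^ s ∂μ ≤ (∫ x, g x ^ t ∂μ) ^ (s / t) := by
  have ht : 0 < t := hs.trans_le hst
  have hints : Integrable (fun x => g x ^ s) μ := by
    refine Integrable.mono ((integrable_const (1:ℝ)).add hint) ?_ ?_
    · exact (hm.pow aemeasurable_const).aestronglyMeasurable
    · refine Filter.Eventually.of_forall fun x => ?_
      have h1 : (0:ℝ) ≤ g x ^ s := Real.rpow_nonneg (hg x) s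
      have h2 : (0:ℝ) ≤ g x ^ t := Real.rpow_nonneg (hg x) t
      simp only [Pi.add_apply]
      rw [Real.norm_of_nonneg h1, Real.norm_of_nonneg (by linarith : (0:ℝ) ≤ 1 + g x ^ t)]
      exact my_rpow_le_one_add_rpow (hg x) hs hst
  have hIs0 : 0 ≤ ∫ x, g x ^ s ∂μ := integral_nonneg fun x => Real.rpow_nonneg (hg x) s
  have hIt0 : 0 ≤ ∫ x, g x ^ t ∂μ := integral_nonneg fun x => Real.rpow_nonneg (hg x) t
  have lin : ∀ u : ℝ, 0 < u → Integrable (fun x => g x ^ u) μ →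
      ENNReal.ofReal (∫ x, g x ^ u ∂μ) = ∫⁻ x, ‖g x‖ₑ ^ u ∂μ := by
    intro u hu hintu
    rw [ofReal_integral_eq_lintegral_ofReal hintu
      (Filter.Eventually.of_forall fun x => Real.rpow_nonneg (hg x) u)]
    refine lintegral_congr fun x => ?_
    rw [← ofReal_norm, Real.norm_of_nonneg (hg x),
      ENNReal.ofReal_rpow_of_nonneg (hg x) hu.le]
  have hsm : AEStronglyMeasurable g μ := hm.aestronglyMeasurable
  have mono := eLpNorm_le_eLpNorm_of_exponent_le (μ := μ)
    (ENNReal.ofReal_le_ofReal hst) hsm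
  rw [eLpNorm_eq_lintegral_rpow_enorm_toReal (by simp [hs]) (by simp),
      eLpNorm_eq_lintegral_rpow_enorm_toReal (by simp [ht] : ENNReal.ofReal t ≠ 0) (by simp),
      ENNReal.toReal_ofReal hs.le, ENNReal.toReal_ofReal ht.le] at mono
  rw [← lin s hs hints, ← lin t ht hint] at mono
  have key : ENNReal.ofReal (∫ x, g x ^ s ∂μ)
      ≤ (ENNReal.ofReal (∫ x, g x ^ t ∂μ)) ^ (s / t) := by
    have := ENNReal.rpow_le_rpow mono hs.le
    rwa [← ENNReal.rpow_mul, ← ENNReal.rpow_mul, one_div_mul_cancel hs.ne',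
      ENNReal.rpow_one, one_div, inv_mul_eq_div] at this
  rw [ENNReal.ofReal_rpow_of_nonneg hIt0 (div_nonneg hs.le ht.le)] at key
  exact (ENNReal.ofReal_le_ofReal_iff (Real.rpow_nonneg hIt0 _)).mp key

lemma my_cauchy_schwarz {α : Type*} [MeasurableSpace α] {μ : Measure α} {f h : α → ℝ}
    (hf : MemLp f 2 μ) (hh : MemLp h 2 μ) :
    |∫ x, f x * h x ∂μ| ≤ (∫ x, f x ^ 2 ∂μ) ^ ((1:ℝ)/2) * (∫ x, h x ^ 2 ∂μ) ^ ((1:ℝ)/2) := by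
  have hpq : Real.HolderConjugate 2 2 := Real.HolderConjugate.two_two
  have h2 : ENNReal.ofReal (2:ℝ) = 2 := by norm_num
  have key := integral_mul_norm_le_Lp_mul_Lq (μ := μ) (f := f) (g := h) hpq
    (by rw [h2]; exact hf) (by rw [h2]; exact hh)
  have e1 : ∀ u : α → ℝ, (∫ x, ‖u x‖ ^ (2:ℝ) ∂μ) = ∫ x, u x ^ 2 ∂μ := by
    intro u
    refine integral_congr_ae (Filter.Eventually.of_forall fun x => ?_)
    show ‖u x‖ ^ (2:ℝ) = u x ^ 2
    rw [Real.rpow_two, Real.norm_eq_abs, sq_abs]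
  calc |∫ x, f x * h x ∂μ| ≤ ∫ x, |f x| * |h x| ∂μ := by
        simpa [abs_mul] using norm_integral_le_integral_norm (μ := μ) (fun x => f x * h x)
    _ = ∫ x, ‖f x‖ * ‖h x‖ ∂μ := by simp [Real.norm_eq_abs]
    _ ≤ (∫ x, ‖f x‖ ^ (2:ℝ) ∂μ) ^ (1/(2:ℝ)) * (∫ x, ‖h x‖ ^ (2:ℝ) ∂μ) ^ (1/(2:ℝ)) := key
    _ = (∫ x, f x ^ 2 ∂μ) ^ ((1:ℝ)/2) * (∫ x, h x ^ 2 ∂μ) ^ ((1:ℝ)/2) := by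
        rw [e1 f, e1 h]

lemma my_coord_le {d : ℕ} (x : EuclideanSpace ℝ (Fin d)) (i : Fin d) : |x i| ≤ ‖x‖ := by
  rw [EuclideanSpace.norm_eq]
  rw [← Real.sqrt_sq_eq_abs]
  apply Real.sqrt_le_sqrt
  have := Finset.single_le_sum (f := fun j => ‖x j‖ ^ 2)
    (fun j _ => by positivity) (Finset.mem_univ i)
  simpa [Real.norm_eq_abs, sq_abs] using this

lemma my_sq_rpow {I e : ℝ} (hI : 0 ≤ I) : (I ^ e) ^ 2 = I ^ (e * 2) := by
  rw [← Real.rpow_two, ← Real.rpow_mul hI]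

lemma my_int_bound {α : Type*} [MeasurableSpace α] {ν : Measure α} [IsProbabilityMeasure ν]
    {f G : α → ℝ} (hG0 : ∀ z, 0 ≤ G z) (hGm : AEMeasurable G ν)
    (hfm : AEStronglyMeasurable f ν) (hfb : ∀ z, |f z| ≤ G z)
    {t : ℝ} (ht : 1 ≤ t) (hint : Integrable (fun z => G z ^ t) ν) :
    |∫ z, f z ∂ν| ≤ (∫ z, G z ^ t ∂ν) ^ (1 / t) := by
  have hGint : Integrable G ν := by
    refine ((integrable_const (1:ℝ)).add hint).mono' hGm.aestronglyMeasurable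
      (Filter.Eventually.of_forall fun z => ?_)
    rw [Real.norm_of_nonneg (hG0 z)]
    have := my_rpow_le_one_add_rpow (hG0 z) one_pos ht
    rwa [Real.rpow_one] at this
  have hfint : Integrable f ν :=
    hGint.mono' hfm (Filter.Eventually.of_forall fun z => by
      rw [Real.norm_eq_abs]; exact hfb z)
  have h1 : |∫ z, f z ∂ν| ≤ ∫ z, G z ∂ν := by
    calc |∫ z, f z ∂ν| ≤ ∫ z, |f z| ∂ν := by
          simpa using norm_integral_le_integral_norm (μ := ν) f
      _ ≤ ∫ z, G z ∂ν := integral_mono hfint.abs hGint hfb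
  have h2 : ∫ z, G z ∂ν ≤ (∫ z, G z ^ t ∂ν) ^ (1 / t) := by
    have := my_jensen hG0 hGm one_pos ht hint
    simpa [Real.rpow_one] using this
  exact h1.trans h2

lemma my_diff_bound {α : Type*} [MeasurableSpace α] {ρ : Measure α} [IsProbabilityMeasure ρ]
    {φ₁ φ₂ : α → ℝ} (hm₁ : Measurable φ₁) (hm₂ : Measurable φ₂)
    (h0₁ : ∀ z, 0 ≤ φ₁ z) (h0₂ : ∀ z, 0 ≤ φ₂ z)
    (hL2₁ : MemLp φ₁ 2 ρ) (hL2₂ : MemLp φ₂ 2 ρ)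
    {f : α → ℝ} (hfm : Measurable f) (hf2 : Integrable (fun z => f z ^ 2) ρ)
    {B : ℝ} (hB : ∫ z, f z ^ 2 ∂ρ ≤ B ^ 2) (hB0 : 0 ≤ B) :
    |(∫ z, f z ∂(ρ.withDensity fun z => ENNReal.ofReal (φ₁ z)))
      - ∫ z, f z ∂(ρ.withDensity fun z => ENNReal.ofReal (φ₂ z))|
      ≤ B * (∫ z, (φ₁ z - φ₂ z) ^ 2 ∂ρ) ^ ((1:ℝ)/2) := by
  have hwd : ∀ (φ : α → ℝ), Measurable φ → (∀ z, 0 ≤ φ z) →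
      (∫ z, f z ∂(ρ.withDensity fun z => ENNReal.ofReal (φ z))) = ∫ z, φ z * f z ∂ρ := by
    intro φ hφ hφ0
    have heq : (fun z => ENNReal.ofReal (φ z))
        = fun z => (((fun z => (φ z).toNNReal) z : ℝ≥0) : ℝ≥0∞) := rfl
    rw [heq, integral_withDensity_eq_integral_smul
      (f := fun z => (φ z).toNNReal) (measurable_real_toNNReal.comp hφ) f]
    refine integral_congr_ae (Filter.Eventually.of_forall fun z => ?_)
    simp [NNReal.smul_def, Real.coe_toNNReal _ (hφ0 z)]
  have hint : ∀ φ : α → ℝ, Measurable φ → MemLp φ 2 ρ → Integrable (fun z => φ z * f z) ρ := by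
    intro φ hφ hφ2
    have hsq : Integrable (fun z => (φ z ^ 2 + f z ^ 2) / 2) ρ :=
      (hφ2.integrable_sq.add hf2).div_const 2
    refine hsq.mono' ((hφ.mul hfm).aestronglyMeasurable)
      (Filter.Eventually.of_forall fun z => ?_)
    rw [Real.norm_eq_abs, abs_mul]
    nlinarith [sq_abs (φ z), sq_abs (f z), sq_nonneg (|φ z| - |f z|), abs_nonneg (φ z),
      abs_nonneg (f z)]
  rw [hwd φ₁ hm₁ h0₁, hwd φ₂ hm₂ h0₂, ← integral_sub (hint φ₁ hm₁ hL2₁) (hint φ₂ hm₂ hL2₂)]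
  have heq2 : (∫ z, (φ₁ z * f z - φ₂ z * f z) ∂ρ) = ∫ z, f z * (φ₁ z - φ₂ z) ∂ρ :=
    integral_congr_ae (Filter.Eventually.of_forall fun z => by ring)
  rw [heq2]
  have hfL2 : MemLp f 2 ρ := (memLp_two_iff_integrable_sq hfm.aestronglyMeasurable).mpr hf2
  have hcs := my_cauchy_schwarz hfL2 (hL2₁.sub hL2₂)
  refine hcs.trans ?_
  have hf2' : (∫ z, f z ^ 2 ∂ρ) ^ ((1:ℝ)/2) ≤ B := by
    have h1 : (∫ z, f z ^ 2 ∂ρ) ^ ((1:ℝ)/2) ≤ (B ^ 2) ^ ((1:ℝ)/2) :=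
      Real.rpow_le_rpow (integral_nonneg fun z => sq_nonneg _) hB (by norm_num)
    have h2 : (B ^ 2) ^ ((1:ℝ)/2) = B := by
      rw [← Real.rpow_two, ← Real.rpow_mul hB0]
      norm_num
    linarith
  have hD0 : 0 ≤ (∫ z, (φ₁ z - φ₂ z) ^ 2 ∂ρ) ^ ((1:ℝ)/2) :=
    Real.rpow_nonneg (integral_nonneg fun z => sq_nonneg _) _
  exact mul_le_mul_of_nonneg_right hf2' hD0

lemma my_entry_bound {m₁ m₂ a₁ a₂ b₁ b₂ X Y₁ Y₂ D : ℝ}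
    (hm : |m₁ - m₂| ≤ X ^ 2 * D) (ha : |a₁ - a₂| ≤ X * D) (hb : |b₁ - b₂| ≤ X * D)
    (hb₁ : |b₁| ≤ Y₁) (ha₂ : |a₂| ≤ Y₂)
    (hX : 0 ≤ X) (hD : 0 ≤ D) (hY₁ : 0 ≤ Y₁) (hY₂ : 0 ≤ Y₂) :
    |(m₁ - a₁ * b₁) - (m₂ - a₂ * b₂)| ≤ 2 * D * (1 + X ^ 2 + Y₁ ^ 2 + Y₂ ^ 2) := by
  have h1 : (m₁ - a₁ * b₁) - (m₂ - a₂ * b₂)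
      = (m₁ - m₂) + (-((a₁ - a₂) * b₁) + -(a₂ * (b₁ - b₂))) := by ring
  have h2 : |(m₁ - a₁ * b₁) - (m₂ - a₂ * b₂)|
      ≤ |m₁ - m₂| + (|a₁ - a₂| * |b₁| + |a₂| * |b₁ - b₂|) := by
    rw [h1]
    refine (abs_add_le _ _).trans ?_
    gcongr
    refine (abs_add_le _ _).trans ?_
    rw [abs_neg, abs_neg, abs_mul, abs_mul]
  have p1 : |a₁ - a₂| * |b₁| ≤ X * D * Y₁ :=
    mul_le_mul ha hb₁ (abs_nonneg _) (mul_nonneg hX hD)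
  have p2 : |a₂| * |b₁ - b₂| ≤ Y₂ * (X * D) :=
    mul_le_mul ha₂ hb (abs_nonneg _) hY₂
  nlinarith [mul_nonneg hD (sq_nonneg (X - Y₁)), mul_nonneg hD (sq_nonneg (X - Y₂)),
    mul_nonneg hD (sq_nonneg X), mul_nonneg hD (sq_nonneg Y₁), mul_nonneg hD (sq_nonneg Y₂), hD]

open MeasureTheory
open scoped ENNReal NNReal


/-- The covariance matrix of the first marginal (on `ℝ^d`) of a measure on `ℝ^d × A`:
`Cov(ν) = ∫ z zᵀ dν̂ − (∫ z dν̂)(∫ z dν̂)ᵀ`, where `ν̂` is the marginal of `ν` on `ℝ^d`. -/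
noncomputable def covMatrix {d : ℕ} {A : Type*} [MeasurableSpace A]
    (ν : Measure (EuclideanSpace ℝ (Fin d) × A)) : Matrix (Fin d) (Fin d) ℝ :=
  Matrix.of fun i j =>
    (∫ x, x i * x j ∂(ν.map Prod.fst))
      - (∫ x, x i ∂(ν.map Prod.fst)) * (∫ x, x j ∂(ν.map Prod.fst))

/-- If `h(ν) = F(Cov(ν))` with `F` Lipschitz from the `d×d` matrices with the
Frobenius norm to `ℝ^d`, then for `r ≥ 4`, `q ≥ 2` there is `L ≥ 0` such that for every
`ρ ∈ P_r(ℝ^d × A)` and all `ν₁, ν₂ ∈ P_q(ℝ^d × A)` absolutely continuous with respect to `ρ`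
with densities `φ₁, φ₂ ∈ L²(ρ)`:
`|h(ν₁) − h(ν₂)| ≤ L (∫|φ₁－φ₂|²dρ)^{1/2} (1 + ‖ρ‖_{W_r}² + ‖ν₁‖_{W_q}² + ‖ν₂‖_{W_q}²)`. -/
theorem stmt12
    {d : ℕ} (hd : 1 ≤ d)
    {A : Type*} [MetricSpace A] [TopologicalSpace.SeparableSpace A] [CompleteSpace A]
    [MeasurableSpace A] [BorelSpace A] (a₀ : A)
    (F : Matrix (Fin d) (Fin d) ℝ → EuclideanSpace ℝ (Fin d)) (LF : ℝ)
    (hF : ∀ M M' : Matrix (Fin d) (Fin d) ℝ,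
      ‖F M - F M'‖ ≤ LF * Real.sqrt (∑ i, ∑ j, (M i j - M' i j) ^ 2))
    {r q : ℝ} (hr : 4 ≤ r) (hq : 2 ≤ q) :
    ∃ L : ℝ, 0 ≤ L ∧
      ∀ ρ : Measure (EuclideanSpace ℝ (Fin d) × A), IsProbabilityMeasure ρ →
        Integrable (fun z => (‖z.1‖ + dist z.2 a₀) ^ r) ρ →
        ∀ φ₁ φ₂ : EuclideanSpace ℝ (Fin d) × A → ℝ,
          Measurable φ₁ → Measurable φ₂ → (∀ z, 0 ≤ φ₁ z) → (∀ z, 0 ≤ φ₂ z) →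
          MemLp φ₁ 2 ρ → MemLp φ₂ 2 ρ →
          ∀ ν₁ ν₂ : Measure (EuclideanSpace ℝ (Fin d) × A),
            IsProbabilityMeasure ν₁ → IsProbabilityMeasure ν₂ →
            ν₁ = ρ.withDensity (fun z => ENNReal.ofReal (φ₁ z)) →
            ν₂ = ρ.withDensity (fun z => ENNReal.ofReal (φ₂ z)) →
            Integrable (fun z => (‖z.1‖ + dist z.2 a₀) ^ q) ν₁ →
            Integrable (fun z => (‖z.1‖ + dist z.2 a₀) ^ q) ν₂ →
            ‖F (covMatrix ν₁) - F (covMatrix ν₂)‖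
              ≤ L * (∫ z, (φ₁ z - φ₂ z) ^ 2 ∂ρ) ^ ((1:ℝ) / 2)
                * (1 + ((∫ z, (‖z.1‖ + dist z.2 a₀) ^ r ∂ρ) ^ (1 / r)) ^ 2
                   + ((∫ z, (‖z.1‖ + dist z.2 a₀) ^ q ∂ν₁) ^ (1 / q)) ^ 2
                   + ((∫ z, (‖z.1‖ + dist z.2 a₀) ^ q ∂ν₂) ^ (1 / q)) ^ 2) := by
  classical
  refine ⟨2 * (d : ℝ) * |LF|, by positivity, ?_⟩
  intro ρ hρ hρr φ₁ φ₂ hmφ₁ hmφ₂ h0φ₁ h0φ₂ hL2φ₁ hL2φ₂ ν₁ ν₂ hP₁ hP₂ hd₁ hd₂ hgq₁ hgq₂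
  haveI := hρ; haveI := hP₁; haveI := hP₂
  have hr0 : (0:ℝ) < r := by linarith
  have hq0 : (0:ℝ) < q := by linarith
  have hq1 : (1:ℝ) ≤ q := by linarith
  -- the weight function
  have hGc : Continuous (fun z : EuclideanSpace ℝ (Fin d) × A => ‖z.1‖ + dist z.2 a₀) :=
    (continuous_fst.norm).add (continuous_snd.dist continuous_const)
  have hGm : Measurable (fun z : EuclideanSpace ℝ (Fin d) × A => ‖z.1‖ + dist z.2 a₀) :=
    hGc.measurable
  have hG0 : ∀ z : EuclideanSpace ℝ (Fin d) × A, 0 ≤ ‖z.1‖ + dist z.2 a₀ :=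
    fun z => add_nonneg (norm_nonneg _) dist_nonneg
  have hcoordc : ∀ i : Fin d, Continuous (fun z : EuclideanSpace ℝ (Fin d) × A => z.1 i) := by
    intro i
    have h1 : Continuous (fun x : EuclideanSpace ℝ (Fin d) => x i) :=
      (EuclideanSpace.proj (𝕜 := ℝ) i).continuous
    exact h1.comp continuous_fst
  have hcoord : ∀ (z : EuclideanSpace ℝ (Fin d) × A) (i : Fin d),
      |z.1 i| ≤ ‖z.1‖ + dist z.2 a₀ :=
    fun z i => (my_coord_le z.1 i).trans (le_add_of_nonneg_right dist_nonneg)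
  -- abbreviations
  set IR := ∫ z, (‖z.1‖ + dist z.2 a₀) ^ r ∂ρ with hIRdef
  set IQ₁ := ∫ z, (‖z.1‖ + dist z.2 a₀) ^ q ∂ν₁ with hIQ₁def
  set IQ₂ := ∫ z, (‖z.1‖ + dist z.2 a₀) ^ q ∂ν₂ with hIQ₂def
  set SD := ∫ z, (φ₁ z - φ₂ z) ^ 2 ∂ρ with hSDdef
  have hIR0 : 0 ≤ IR := integral_nonneg fun z => Real.rpow_nonneg (hG0 z) r
  have hIQ₁0 : 0 ≤ IQ₁ := integral_nonneg fun z => Real.rpow_nonneg (hG0 z) q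
  have hIQ₂0 : 0 ≤ IQ₂ := integral_nonneg fun z => Real.rpow_nonneg (hG0 z) q
  set X := IR ^ (1 / r) with hXdef
  set Y₁ := IQ₁ ^ (1 / q) with hY₁def
  set Y₂ := IQ₂ ^ (1 / q) with hY₂def
  set D := SD ^ ((1:ℝ) / 2) with hDdef
  have hX0 : 0 ≤ X := Real.rpow_nonneg hIR0 _
  have hY₁0 : 0 ≤ Y₁ := Real.rpow_nonneg hIQ₁0 _
  have hY₂0 : 0 ≤ Y₂ := Real.rpow_nonneg hIQ₂0 _
  have hD0 : 0 ≤ D := Real.rpow_nonneg (integral_nonneg fun z => sq_nonneg _) _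
  -- integrability of powers of G w.r.t. ρ
  have hint_pow : ∀ s : ℝ, 0 < s → s ≤ r →
      Integrable (fun z => (‖z.1‖ + dist z.2 a₀) ^ s) ρ := by
    intro s hs hsr
    refine ((integrable_const (1:ℝ)).add hρr).mono'
      ((hGm.pow measurable_const).aestronglyMeasurable)
      (Filter.Eventually.of_forall fun z => ?_)
    rw [Real.norm_of_nonneg (Real.rpow_nonneg (hG0 z) s)]
    exact my_rpow_le_one_add_rpow (hG0 z) hs hsr
  -- Jensen bounds over ρ
  have hJ4 : ∫ z, (‖z.1‖ + dist z.2 a₀) ^ (4:ℝ) ∂ρ ≤ (X ^ 2) ^ 2 := by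
    have h1 := my_jensen hG0 hGm.aemeasurable (by norm_num : (0:ℝ) < 4) hr hρr
    have h2 : (X ^ 2) ^ 2 = IR ^ ((4:ℝ) / r) := by
      rw [hXdef, my_sq_rpow hIR0, my_sq_rpow hIR0]
      congr 1; ring
    rw [h2]
    exact h1
  have hJ2 : ∫ z, (‖z.1‖ + dist z.2 a₀) ^ (2:ℝ) ∂ρ ≤ X ^ 2 := by
    have h1 := my_jensen hG0 hGm.aemeasurable (by norm_num : (0:ℝ) < 2) (by linarith) hρr
    have h2 : X ^ 2 = IR ^ ((2:ℝ) / r) := by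
      rw [hXdef, my_sq_rpow hIR0]
      congr 1; ring
    rw [h2]
    exact h1
  -- the quadratic integrand bounds
  have hfij : ∀ i j : Fin d, Integrable (fun z : EuclideanSpace ℝ (Fin d) × A =>
      (z.1 i * z.1 j) ^ 2) ρ ∧ (∫ z, (z.1 i * z.1 j) ^ 2 ∂ρ) ≤ ((X ^ 2) ^ 2) := by
    intro i j
    have hb : ∀ z : EuclideanSpace ℝ (Fin d) × A,
        (z.1 i * z.1 j) ^ 2 ≤ (‖z.1‖ + dist z.2 a₀) ^ (4:ℝ) := by
      intro z
      have h1 : |z.1 i * z.1 j| ≤ (‖z.1‖ + dist z.2 a₀) ^ (2:ℝ) := by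
        rw [abs_mul, Real.rpow_two, sq]
        exact mul_le_mul (hcoord z i) (hcoord z j) (abs_nonneg _) (hG0 z)
      have h3 : ((‖z.1‖ + dist z.2 a₀) ^ (2:ℝ)) ^ 2 = (‖z.1‖ + dist z.2 a₀) ^ (4:ℝ) := by
        rw [my_sq_rpow (hG0 z)]; norm_num
      calc (z.1 i * z.1 j) ^ 2 = |z.1 i * z.1 j| ^ 2 := (sq_abs _).symm
        _ ≤ ((‖z.1‖ + dist z.2 a₀) ^ (2:ℝ)) ^ 2 := pow_le_pow_left₀ (abs_nonneg _) h1 2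
        _ = _ := h3
    have hint4 := hint_pow 4 (by norm_num) hr
    have hintegr : Integrable (fun z : EuclideanSpace ℝ (Fin d) × A =>
        (z.1 i * z.1 j) ^ 2) ρ := by
      refine hint4.mono' ((((hcoordc i).mul (hcoordc j)).pow 2).aestronglyMeasurable) (Filter.Eventually.of_forall fun z => ?_)
      rw [Real.norm_of_nonneg (sq_nonneg _)]
      exact hb z
    exact ⟨hintegr, (integral_mono hintegr hint4 hb).trans hJ4⟩
  have hfi : ∀ i : Fin d, Integrable (fun z : EuclideanSpace ℝ (Fin d) × A =>
      (z.1 i) ^ 2) ρ ∧ (∫ z, (z.1 i) ^ 2 ∂ρ) ≤ X ^ 2 := by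
    intro i
    have hb : ∀ z : EuclideanSpace ℝ (Fin d) × A,
        (z.1 i) ^ 2 ≤ (‖z.1‖ + dist z.2 a₀) ^ (2:ℝ) := by
      intro z
      rw [Real.rpow_two]
      calc (z.1 i) ^ 2 = |z.1 i| ^ 2 := (sq_abs _).symm
        _ ≤ (‖z.1‖ + dist z.2 a₀) ^ 2 := pow_le_pow_left₀ (abs_nonneg _) (hcoord z i) 2
    have hint2 := hint_pow 2 (by norm_num) (by linarith)
    have hintegr : Integrable (fun z : EuclideanSpace ℝ (Fin d) × A => (z.1 i) ^ 2) ρ := by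
      refine hint2.mono' (((hcoordc i).pow 2).aestronglyMeasurable)
        (Filter.Eventually.of_forall fun z => ?_)
      rw [Real.norm_of_nonneg (sq_nonneg _)]
      exact hb z
    exact ⟨hintegr, (integral_mono hintegr hint2 hb).trans hJ2⟩
  -- rewrite the covariance entries
  have hmapij : ∀ (ν : Measure (EuclideanSpace ℝ (Fin d) × A)) (i j : Fin d),
      (∫ x, x i * x j ∂(ν.map Prod.fst)) = ∫ z, z.1 i * z.1 j ∂ν := by
    intro ν i j
    have hc : Continuous (fun x : EuclideanSpace ℝ (Fin d) => x i * x j) :=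
      (EuclideanSpace.proj (𝕜 := ℝ) i).continuous.mul (EuclideanSpace.proj (𝕜 := ℝ) j).continuous
    exact integral_map measurable_fst.aemeasurable hc.aestronglyMeasurable
  have hmapi : ∀ (ν : Measure (EuclideanSpace ℝ (Fin d) × A)) (i : Fin d),
      (∫ x, x i ∂(ν.map Prod.fst)) = ∫ z, z.1 i ∂ν := by
    intro ν i
    have hc : Continuous (fun x : EuclideanSpace ℝ (Fin d) => x i) :=
      (EuclideanSpace.proj (𝕜 := ℝ) i).continuous
    exact integral_map measurable_fst.aemeasurable hc.aestronglyMeasurable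
  have hcov : ∀ (ν : Measure (EuclideanSpace ℝ (Fin d) × A)) (i j : Fin d),
      covMatrix ν i j = (∫ z, z.1 i * z.1 j ∂ν) - (∫ z, z.1 i ∂ν) * (∫ z, z.1 j ∂ν) := by
    intro ν i j
    simp only [covMatrix, Matrix.of_apply]
    rw [hmapij ν i j, hmapi ν i, hmapi ν j]
  -- difference bounds
  have hdm : ∀ i j : Fin d,
      |(∫ z, z.1 i * z.1 j ∂ν₁) - ∫ z, z.1 i * z.1 j ∂ν₂| ≤ X ^ 2 * D := by
    intro i j
    rw [hd₁, hd₂]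
    have h1 := my_diff_bound hmφ₁ hmφ₂ h0φ₁ h0φ₂ hL2φ₁ hL2φ₂
      (f := fun z => z.1 i * z.1 j) ((hcoordc i).mul (hcoordc j)).measurable
      (hfij i j).1 (hfij i j).2 (by positivity)
    rw [← hSDdef, ← hDdef] at h1
    exact h1
  have hde : ∀ i : Fin d,
      |(∫ z, z.1 i ∂ν₁) - ∫ z, z.1 i ∂ν₂| ≤ X * D := by
    intro i
    rw [hd₁, hd₂]
    have h1 := my_diff_bound hmφ₁ hmφ₂ h0φ₁ h0φ₂ hL2φ₁ hL2φ₂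
      (f := fun z => z.1 i) (hcoordc i).measurable
      (hfi i).1 (hfi i).2 hX0
    rw [← hSDdef, ← hDdef] at h1
    exact h1
  have he₁ : ∀ i : Fin d, |∫ z, z.1 i ∂ν₁| ≤ Y₁ := by
    intro i
    have h1 := my_int_bound (ν := ν₁) hG0 hGm.aemeasurable
      (hcoordc i).aestronglyMeasurable (fun z => hcoord z i) hq1 hgq₁
    rw [← hIQ₁def, ← hY₁def] at h1
    exact h1
  have he₂ : ∀ i : Fin d, |∫ z, z.1 i ∂ν₂| ≤ Y₂ := by
    intro i
    have h1 := my_int_bound (ν := ν₂) hG0 hGm.aemeasurable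
      (hcoordc i).aestronglyMeasurable (fun z => hcoord z i) hq1 hgq₂
    rw [← hIQ₂def, ← hY₂def] at h1
    exact h1
  -- entrywise bound
  have hentry : ∀ i j : Fin d,
      |covMatrix ν₁ i j - covMatrix ν₂ i j| ≤ 2 * D * (1 + X ^ 2 + Y₁ ^ 2 + Y₂ ^ 2) := by
    intro i j
    rw [hcov ν₁ i j, hcov ν₂ i j]
    exact my_entry_bound (hdm i j) (hde i) (hde j) (he₁ j) (he₂ i) hX0 hD0 hY₁0 hY₂0
  set S := 1 + X ^ 2 + Y₁ ^ 2 + Y₂ ^ 2 with hSdef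
  have hS0 : 0 ≤ S := by positivity
  have hsum : (∑ i, ∑ j, (covMatrix ν₁ i j - covMatrix ν₂ i j) ^ 2)
      ≤ ((d:ℝ) * (2 * D * S)) ^ 2 := by
    have hc : ∀ i j : Fin d,
        (covMatrix ν₁ i j - covMatrix ν₂ i j) ^ 2 ≤ (2 * D * S) ^ 2 := by
      intro i j
      calc (covMatrix ν₁ i j - covMatrix ν₂ i j) ^ 2
          = |covMatrix ν₁ i j - covMatrix ν₂ i j| ^ 2 := (sq_abs _).symm
        _ ≤ (2 * D * S) ^ 2 := pow_le_pow_left₀ (abs_nonneg _) (hentry i j) 2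
    calc (∑ i, ∑ j, (covMatrix ν₁ i j - covMatrix ν₂ i j) ^ 2)
        ≤ ∑ _i : Fin d, ∑ _j : Fin d, (2 * D * S) ^ 2 :=
          Finset.sum_le_sum fun i _ => Finset.sum_le_sum fun j _ => hc i j
      _ = ((d:ℝ) * (2 * D * S)) ^ 2 := by
          simp [Finset.sum_const, Finset.card_univ, nsmul_eq_mul]
          ring
  have hsqrt : Real.sqrt (∑ i, ∑ j, (covMatrix ν₁ i j - covMatrix ν₂ i j) ^ 2)
      ≤ (d:ℝ) * (2 * D * S) := by
    have h1 := Real.sqrt_le_sqrt hsum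
    rwa [Real.sqrt_sq (by positivity)] at h1
  calc ‖F (covMatrix ν₁) - F (covMatrix ν₂)‖
      ≤ LF * Real.sqrt (∑ i, ∑ j, (covMatrix ν₁ i j - covMatrix ν₂ i j) ^ 2) :=
        hF _ _
    _ ≤ |LF| * Real.sqrt (∑ i, ∑ j, (covMatrix ν₁ i j - covMatrix ν₂ i j) ^ 2) :=
        mul_le_mul_of_nonneg_right (le_abs_self LF) (Real.sqrt_nonneg _)
    _ ≤ |LF| * ((d:ℝ) * (2 * D * S)) :=
        mul_le_mul_of_nonneg_left hsqrt (abs_nonneg _)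
    _ = 2 * (d:ℝ) * |LF| * D * S := by ring
end
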